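/- arXiv:1403.4330 — 2 statements merged into one kernel-verified Lean document; each statement's English description precedes it below -/
import Mathlib

section
/- Let K_i ∈ ℝ^{(m_i+…+m_N)×n} and L_i ∈ ℝ^{n×(p_1+…+p_i)} (i = 1,…,N) be gains such that A^{KL}_{k,k−1} is Hurwitz for every k = 1,…,N+1. Then the closed-loop matrix 𝒜 = [[A_K, B_KC],[BC_K, A]] is Hurwitz; i.e., the controller with realization (A_K, B_K, C_K) internally stabilizes the plant. -/
open Matrix

namespace TriLQG

noncomputable section

variable {N : ℕ}

/-- Index type of an `(N+1)`-block partitioned coordinate space with block sizes `d`. -/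
abbrev Idx {N : ℕ} (d : Fin (N+1) → ℕ) : Type := Σ k : Fin (N+1), Fin (d k)

/-- Indices belonging to blocks `i, i+1, …, N`. -/
abbrev IdxGe {N : ℕ} (d : Fin (N+1) → ℕ) (i : Fin (N+1)) : Type := {x : Idx d // i ≤ x.1}

/-- Indices belonging to blocks `0, 1, …, i`. -/
abbrev IdxLe {N : ℕ} (d : Fin (N+1) → ℕ) (i : Fin (N+1)) : Type := {x : Idx d // x.1 ≤ i}

/-- The selector matrix `E^{↓i}` (columns of the identity for blocks `i,…,N`). -/
def padGe (d : Fin (N+1) → ℕ) (i : Fin (N+1)) : Matrix (Idx d) (IdxGe d i) ℝ :=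
  Matrix.of fun r c => if r = (c : Idx d) then 1 else 0

/-- The selector matrix `E^{↑i}` (columns of the identity for blocks `0,…,i`). -/
def padLe (d : Fin (N+1) → ℕ) (i : Fin (N+1)) : Matrix (Idx d) (IdxLe d i) ℝ :=
  Matrix.of fun r c => if r = (c : Idx d) then 1 else 0

/-- Complexification of a real matrix. -/
def mc {α β : Type*} (M : Matrix α β ℝ) : Matrix α β ℂ := M.map Complex.ofReal

/-- A real square matrix is Hurwitz if its (complex) spectrum lies in the open left half plane. -/
def IsHurwitz {t : Type*} [Fintype t] [DecidableEq t] (M : Matrix t t ℝ) : Prop :=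
  ∀ z ∈ spectrum ℂ (mc M), z.re < 0

open Classical in
/-- The (unique, symmetric, positive semidefinite) square root of a positive semidefinite
real matrix; junk value `0` if the matrix is not positive semidefinite. -/
def msqrt {t : Type*} [Fintype t] [DecidableEq t] (M : Matrix t t ℝ) : Matrix t t ℝ :=
  if h : M.PosSemidef then
    (h.1.eigenvectorUnitary : Matrix t t ℝ) * diagonal (Real.sqrt ∘ h.1.eigenvalues) *
      (star h.1.eigenvectorUnitary : Matrix t t ℝ)
  else 0

/-- Full column rank. -/
def FullColRank {α β : Type*} [Fintype β] {R : Type*} [CommRing R] (M : Matrix α β R) : Prop :=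
  M.rank = Fintype.card β

/-- Full row rank. -/
def FullRowRank {α β : Type*} [Fintype α] [Fintype β] {R : Type*} [CommRing R]
    (M : Matrix α β R) : Prop :=
  M.rank = Fintype.card α

/-- `ARE_p(Ã,B̃,F̃,H̃)` together with its gain: `X` is a symmetric solution of the
control algebraic Riccati equation and `K` is the associated gain. -/
def AREp {n' m' q' : Type*} [Fintype n'] [Fintype m'] [Fintype q'] [DecidableEq m']
    (At : Matrix n' n' ℝ) (Bt : Matrix n' m' ℝ) (Ft : Matrix q' n' ℝ) (Ht : Matrix q' m' ℝ)
    (X : Matrix n' n' ℝ) (K : Matrix m' n' ℝ) : Prop :=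
  X.IsSymm ∧
  Atᵀ * X + X * At - (X * Bt + Ftᵀ * Ht) * (Htᵀ * Ht)⁻¹ * (X * Bt + Ftᵀ * Ht)ᵀ + Ftᵀ * Ft = 0 ∧
  K = -((Htᵀ * Ht)⁻¹ * (X * Bt + Ftᵀ * Ht)ᵀ)

/-- `ARE_d(Ã,C̃,W̃,Ṽ)` together with its gain. -/
def AREd {n' p' r' : Type*} [Fintype n'] [Fintype p'] [Fintype r'] [DecidableEq p']
    (At : Matrix n' n' ℝ) (Ct : Matrix p' n' ℝ) (Wt : Matrix n' r' ℝ) (Vt : Matrix p' r' ℝ)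
    (Y : Matrix n' n' ℝ) (L : Matrix n' p' ℝ) : Prop :=
  Y.IsSymm ∧
  At * Y + Y * Atᵀ - (Ct * Y + Vt * Wtᵀ)ᵀ * (Vt * Vtᵀ)⁻¹ * (Ct * Y + Vt * Wtᵀ) + Wt * Wtᵀ = 0 ∧
  L = -((Ct * Y + Vt * Wtᵀ)ᵀ * (Vt * Vtᵀ)⁻¹)

/-- Lower block triangular sparsity. -/
def IsLBT {N : ℕ} {d e : Fin (N+1) → ℕ} (M : Matrix (Idx d) (Idx e) ℝ) : Prop :=
  ∀ a : Idx d, ∀ b : Idx e, a.1 < b.1 → M a b = 0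

/-- The data of the `(N+1)`-player triangular plant. -/
structure Plant (N : ℕ) where
  nd : Fin (N+1) → ℕ
  md : Fin (N+1) → ℕ
  pd : Fin (N+1) → ℕ
  q : ℕ
  r : ℕ
  A : Matrix (Idx nd) (Idx nd) ℝ
  B : Matrix (Idx nd) (Idx md) ℝ
  C : Matrix (Idx pd) (Idx nd) ℝ
  F : Matrix (Fin q) (Idx nd) ℝ
  H : Matrix (Fin q) (Idx md) ℝ
  W : Matrix (Idx nd) (Fin r) ℝ
  V : Matrix (Idx pd) (Fin r) ℝ

variable (P : Plant N)

/-- family of controller gains `K_i ∈ ℝ^{(m_i+⋯+m_N)×n}` -/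
abbrev KGains (P : Plant N) : Type := (i : Fin (N+1)) → Matrix (IdxGe P.md i) (Idx P.nd) ℝ

/-- family of observer gains `L_i ∈ ℝ^{n×(p_1+⋯+p_i)}` -/
abbrev LGains (P : Plant N) : Type := (i : Fin (N+1)) → Matrix (Idx P.nd) (IdxLe P.pd i) ℝ

/-- family of symmetric matrices `X_i` (or `Y_i`) -/
abbrev SFam (P : Plant N) : Type := Fin (N+1) → Matrix (Idx P.nd) (Idx P.nd) ℝ

def Bdown (i : Fin (N+1)) : Matrix (Idx P.nd) (IdxGe P.md i) ℝ := P.B.submatrix id Subtype.val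
def Hdown (i : Fin (N+1)) : Matrix (Fin P.q) (IdxGe P.md i) ℝ := P.H.submatrix id Subtype.val
def Cup (i : Fin (N+1)) : Matrix (IdxLe P.pd i) (Idx P.nd) ℝ := P.C.submatrix Subtype.val id
def Vup (i : Fin (N+1)) : Matrix (IdxLe P.pd i) (Fin P.r) ℝ := P.V.submatrix Subtype.val id

/-- `Ψ_{↓i}^{↓i} = (H^{↓i})ᵀ H^{↓i}` -/
def Psidd (i : Fin (N+1)) : Matrix (IdxGe P.md i) (IdxGe P.md i) ℝ := (Hdown P i)ᵀ * Hdown P i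

/-- `Φ_{↑j}^{↑j} = V_{↑j} (V_{↑j})ᵀ` -/
def Phiuu (j : Fin (N+1)) : Matrix (IdxLe P.pd j) (IdxLe P.pd j) ℝ := Vup P j * (Vup P j)ᵀ

/-- The coupled Riccati system (2a)–(2d) of the paper. -/
def Coupled (X : SFam P) (K : KGains P) (Y : SFam P) (L : LGains P) : Prop :=
  AREp P.A (Bdown P 0) P.F (Hdown P 0) (X 0) (K 0) ∧
  (∀ t : Fin N,
    AREp (P.A + L t.castSucc * Cup P t.castSucc) (Bdown P t.succ)
      (-(Hdown P t.castSucc * K t.castSucc)) (Hdown P t.succ) (X t.succ) (K t.succ)) ∧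
  AREd P.A (Cup P (Fin.last N)) P.W (Vup P (Fin.last N)) (Y (Fin.last N)) (L (Fin.last N)) ∧
  (∀ t : Fin N,
    AREd (P.A + Bdown P t.succ * K t.succ) (Cup P t.castSucc)
      (-(L t.succ * Vup P t.succ)) (Vup P t.castSucc) (Y t.castSucc) (L t.castSucc))

/-- `A^{KL}_{k+1,k}` for `k = 0, 1, …, N+1` (`k = 0` gives `A+BK_1`,
`k = N+1` gives `A+L_N C`). -/
def AKL (K : KGains P) (L : LGains P) (k : Fin (N+2)) : Matrix (Idx P.nd) (Idx P.nd) ℝ :=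
  if hk : k.1 < N + 1 then
    (if k.1 = 0 then P.A + Bdown P 0 * K 0
     else
       have h1 : k.1 - 1 < N + 1 := by omega
       P.A + Bdown P ⟨k.1, hk⟩ * K ⟨k.1, hk⟩ +
         L ⟨k.1 - 1, h1⟩ * Cup P ⟨k.1 - 1, h1⟩)
  else P.A + L (Fin.last N) * Cup P (Fin.last N)

/-- index set of the `n(N+1)`-dimensional controller state space -/
abbrev CtrIx {N : ℕ} (nd : Fin (N+1) → ℕ) : Type := Fin (N+1) × Idx nd

/-- index set of the `n(N+2)`-dimensional closed-loop state space:
`N+1` controller blocks and one plant block -/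
abbrev BigIx {N : ℕ} (nd : Fin (N+1) → ℕ) : Type := CtrIx nd ⊕ Idx nd

/-- the incidence matrix `ζ` -/
def zetaN (nd : Fin (N+1) → ℕ) : Matrix (CtrIx nd) (CtrIx nd) ℝ :=
  Matrix.of fun x y => if y.1 ≤ x.1 ∧ x.2 = y.2 then 1 else 0

/-- block diagonal matrix -/
def blkDiagN {nd : Fin (N+1) → ℕ} (f : Fin (N+1) → Matrix (Idx nd) (Idx nd) ℝ) :
    Matrix (CtrIx nd) (CtrIx nd) ℝ :=
  Matrix.of fun x y => if x.1 = y.1 then f x.1 x.2 y.2 else 0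

/-- `A_K` of the optimal controller realization -/
def AK (K : KGains P) (L : LGains P) : Matrix (CtrIx P.nd) (CtrIx P.nd) ℝ :=
  blkDiagN (fun _ => P.A) + blkDiagN (fun k => L k * Cup P k) +
    zetaN P.nd * blkDiagN (fun k => Bdown P k * K k) * (zetaN P.nd)⁻¹

/-- `B_K` of the optimal controller realization -/
def BK (L : LGains P) : Matrix (CtrIx P.nd) (Idx P.pd) ℝ :=
  Matrix.of fun x c => -((L x.1 * (padLe P.pd x.1)ᵀ) x.2 c)

/-- `C_K` of the optimal controller realization -/
def CK (K : KGains P) : Matrix (Idx P.md) (CtrIx P.nd) ℝ :=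
  (Matrix.of fun rr (x : CtrIx P.nd) => (padGe P.md x.1 * K x.1) rr x.2) * (zetaN P.nd)⁻¹

/-- closed-loop `𝒜` -/
def Acal (K : KGains P) (L : LGains P) : Matrix (BigIx P.nd) (BigIx P.nd) ℝ :=
  Matrix.fromBlocks (AK P K L) (BK P L * P.C) (P.B * CK P K) P.A

/-- closed-loop `ℬ` -/
def Bcal : Matrix (BigIx P.nd) (Idx P.md) ℝ :=
  Matrix.of fun x j => Sum.elim (fun _ => (0:ℝ)) (fun a => P.B a j) x

/-- closed-loop `𝒲` -/
def Wcal (L : LGains P) : Matrix (BigIx P.nd) (Fin P.r) ℝ :=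
  Matrix.of fun x j => Sum.elim (fun y => (BK P L * P.V) y j) (fun a => P.W a j) x

/-- closed-loop `ℱ` -/
def Fcal (K : KGains P) : Matrix (Fin P.q) (BigIx P.nd) ℝ :=
  Matrix.of fun i x => Sum.elim (fun y => (P.H * CK P K) i y) (fun a => P.F i a) x

/-- closed-loop `𝒞` -/
def Ccal : Matrix (Idx P.pd) (BigIx P.nd) ℝ :=
  Matrix.of fun i x => Sum.elim (fun _ => (0:ℝ)) (fun a => P.C i a) x

/-- block index of a closed-loop index -/
def blkOf {nd : Fin (N+1) → ℕ} (x : BigIx nd) : Fin (N+2) :=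
  Sum.elim (fun y => y.1.castSucc) (fun _ => Fin.last (N+1)) x

/-- within-block state of a closed-loop index -/
def stOf {nd : Fin (N+1) → ℕ} (x : BigIx nd) : Idx nd :=
  Sum.elim Prod.snd id x

/-- the incidence matrix `ζ̄` of the `(N+2)`-fold block structure -/
def zetaBar (nd : Fin (N+1) → ℕ) : Matrix (BigIx nd) (BigIx nd) ℝ :=
  Matrix.of fun x y => if blkOf y ≤ blkOf x ∧ stOf x = stOf y then 1 else 0

/-- embedding of a within-block index into the closed-loop index set, at block `k` -/
def emb {nd : Fin (N+1) → ℕ} (k : Fin (N+2)) (a : Idx nd) : BigIx nd :=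
  if h : k.1 < N + 1 then Sum.inl (⟨⟨k.1, h⟩, a⟩ : CtrIx nd) else Sum.inr a

/-- `𝒦_i` of the paper (eq. (9)). -/
def Kcal (K : KGains P) (i : Fin (N+1)) : Matrix (IdxGe P.md i) (BigIx P.nd) ℝ :=
  (padGe P.md i)ᵀ *
    Matrix.of fun (rr : Idx P.md) (x : BigIx P.nd) =>
      Sum.elim
        (fun y : CtrIx P.nd =>
          if hl : y.1.1 < N then
            (if y.1 < i then (0:ℝ)
             else
               have h1 : y.1.1 + 1 < N + 1 := by omega
               (padGe P.md ⟨y.1.1 + 1, h1⟩ * K ⟨y.1.1 + 1, h1⟩ -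
                   padGe P.md y.1 * K y.1) rr y.2)
          else (-(padGe P.md (Fin.last N) * K (Fin.last N))) rr y.2)
        (fun a => (padGe P.md i * K i) rr a) x

/-- `ℒ_j` of the paper (eq. (10)). -/
def Lcal (L : LGains P) (j : Fin (N+1)) : Matrix (BigIx P.nd) (IdxLe P.pd j) ℝ :=
  Matrix.of fun x c =>
    Sum.elim
      (fun y : CtrIx P.nd =>
        if y.1 < j then (L y.1 * (padLe P.pd y.1)ᵀ * padLe P.pd j) y.2 c else (L j) y.2 c)
      (fun a => (L j) a c) x

/-- `J̃_i` of the paper (eq. (11)). -/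
def Jtil (nd : Fin (N+1) → ℕ) (i : Fin (N+1)) : Matrix (Idx nd) (BigIx nd) ℝ :=
  Matrix.of fun a x =>
    Sum.elim
      (fun y : CtrIx nd => if 0 < i.1 ∧ y.1.1 = i.1 - 1 ∧ a = y.2 then (1:ℝ) else 0)
      (fun b => if a = b then (-1:ℝ) else 0) x

/-- `Ĵ_j` of the paper (eq. (11)). -/
def Jhat (nd : Fin (N+1) → ℕ) (j : Fin (N+1)) : Matrix (BigIx nd) (Idx nd) ℝ :=
  Matrix.of fun x a =>
    Sum.elim
      (fun y : CtrIx nd => if j < y.1 ∧ y.2 = a then (1:ℝ) else 0)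
      (fun b => if b = a then (1:ℝ) else 0) x

/-- `Γ_i = −(Ψ_{↓i}^{↓i})^{1/2} 𝒦_i` for `i ≥ 1` (Lemma 2 of the paper). -/
def Gam (K : KGains P) (i : Fin (N+1)) : Matrix (IdxGe P.md i) (BigIx P.nd) ℝ :=
  -(msqrt (Psidd P i) * Kcal P K i)

/-- `Λ_j = −ℒ_j (Φ_{↑j}^{↑j})^{1/2}` for `j ≤ N` (Lemma 2 of the paper). -/
def Lam (L : LGains P) (j : Fin (N+1)) : Matrix (BigIx P.nd) (IdxLe P.pd j) ℝ :=
  -(Lcal P L j * msqrt (Phiuu P j))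

/-- the inner factor `U_1(s)` -/
def Uone (K : KGains P) (L : LGains P) (s : ℂ) : Matrix (Fin P.q) (IdxGe P.md 0) ℂ :=
  mc (P.F + Hdown P 0 * K 0) * (s • 1 - mc (AKL P K L 0))⁻¹ * mc (Bdown P 0) *
      (mc (msqrt (Psidd P 0)))⁻¹ +
    mc (Hdown P 0) * (mc (msqrt (Psidd P 0)))⁻¹

/-- the inner factor `U_{t+2}(s)` (paper indexing), mapping block level `t+1` to `t` -/
def Usucc (K : KGains P) (L : LGains P) (t : Fin N) (s : ℂ) :
    Matrix (IdxGe P.md t.castSucc) (IdxGe P.md t.succ) ℂ :=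
  mc (msqrt (Psidd P t.castSucc)) *
      mc ((padGe P.md t.castSucc)ᵀ *
        (padGe P.md t.succ * K t.succ - padGe P.md t.castSucc * K t.castSucc)) *
      (s • 1 - mc (AKL P K L t.succ.castSucc))⁻¹ * mc (Bdown P t.succ) *
      (mc (msqrt (Psidd P t.succ)))⁻¹ +
    mc (msqrt (Psidd P t.castSucc)) * mc ((padGe P.md t.castSucc)ᵀ * padGe P.md t.succ) *
      (mc (msqrt (Psidd P t.succ)))⁻¹

/-- the co-inner factor `V_{N+1}(s)` (paper indexing: the last one) -/
def Vlast (K : KGains P) (L : LGains P) (s : ℂ) :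
    Matrix (IdxLe P.pd (Fin.last N)) (Fin P.r) ℂ :=
  (mc (msqrt (Phiuu P (Fin.last N))))⁻¹ * mc (Cup P (Fin.last N)) *
      (s • 1 - mc (AKL P K L (Fin.last (N+1))))⁻¹ *
      mc (P.W + L (Fin.last N) * Vup P (Fin.last N)) +
    (mc (msqrt (Phiuu P (Fin.last N))))⁻¹ * mc (Vup P (Fin.last N))

/-- the co-inner factor `V_{t+1}(s)` (paper indexing), for `t+1 ≤ N` -/
def Vmid (K : KGains P) (L : LGains P) (t : Fin N) (s : ℂ) :
    Matrix (IdxLe P.pd t.castSucc) (IdxLe P.pd t.succ) ℂ :=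
  (mc (msqrt (Phiuu P t.castSucc)))⁻¹ * mc (Cup P t.castSucc) *
      (s • 1 - mc (AKL P K L t.succ.castSucc))⁻¹ *
      mc ((L t.castSucc * (padLe P.pd t.castSucc)ᵀ - L t.succ * (padLe P.pd t.succ)ᵀ) *
        padLe P.pd t.succ * msqrt (Phiuu P t.succ)) +
    (mc (msqrt (Phiuu P t.castSucc)))⁻¹ *
      mc ((padLe P.pd t.castSucc)ᵀ * padLe P.pd t.succ * msqrt (Phiuu P t.succ))

/-- the product `U_1(s) U_2(s) ⋯ U_i(s)` -/
def Uprod (K : KGains P) (L : LGains P) (s : ℂ) :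
    (i : Fin (N+1)) → Matrix (Fin P.q) (IdxGe P.md i) ℂ :=
  Fin.induction (motive := fun i => Matrix (Fin P.q) (IdxGe P.md i) ℂ)
    (Uone P K L s) (fun t ih => ih * Usucc P K L t s)

/-- the product `V_j(s) V_{j+1}(s) ⋯ V_{N+1}(s)` -/
def Vprod (K : KGains P) (L : LGains P) (s : ℂ) :
    (j : Fin (N+1)) → Matrix (IdxLe P.pd j) (Fin P.r) ℂ :=
  Fin.reverseInduction (motive := fun j => Matrix (IdxLe P.pd j) (Fin P.r) ℂ)
    (Vlast P K L s) (fun t ih => Vmid P K L t s * ih)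

/-- closed-loop transfer function `G11(s) = ℱ(sI−𝒜)⁻¹𝒲` -/
def G11 (K : KGains P) (L : LGains P) (s : ℂ) : Matrix (Fin P.q) (Fin P.r) ℂ :=
  mc (Fcal P K) * (s • 1 - mc (Acal P K L))⁻¹ * mc (Wcal P L)

/-- closed-loop transfer function `G12(s) = ℱ(sI−𝒜)⁻¹ℬ + H` -/
def G12 (K : KGains P) (L : LGains P) (s : ℂ) : Matrix (Fin P.q) (Idx P.md) ℂ :=
  mc (Fcal P K) * (s • 1 - mc (Acal P K L))⁻¹ * mc (Bcal P) + mc P.H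

/-- closed-loop transfer function `G21(s) = 𝒞(sI−𝒜)⁻¹𝒲 + V` -/
def G21 (K : KGains P) (L : LGains P) (s : ℂ) : Matrix (Idx P.pd) (Fin P.r) ℂ :=
  mc (Ccal P) * (s • 1 - mc (Acal P K L))⁻¹ * mc (Wcal P L) + mc P.V

end

end TriLQG

namespace TriLQG

namespace Stmt4

open Finset

variable {N : ℕ}

/-! ### Generic sum helpers -/

theorem sum_ite_val {G : Type*} [AddCommMonoid G] {m : ℕ} (t : ℕ) (f : Fin m → G) :
    (∑ k : Fin m, if (k : ℕ) = t then f k else 0) = if ht : t < m then f ⟨t, ht⟩ else 0 := by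
  split_ifs with ht
  · rw [Fintype.sum_eq_single (⟨t, ht⟩ : Fin m) fun x hx =>
      if_neg fun hv => hx (Fin.ext hv)]
    simp
  · exact Finset.sum_eq_zero fun x _ => if_neg (by have := x.isLt; omega)

theorem sum_pick {G : Type*} [AddCommMonoid G] {m t : ℕ} (ht : t < m) (f : ℕ → G) :
    (∑ k ∈ Finset.range m, if k = t then f k else 0) = f t := by
  rw [Finset.sum_ite_eq' (Finset.range m) t f, if_pos (Finset.mem_range.mpr ht)]

theorem sum_range_ite_lt {G : Type*} [AddCommMonoid G] {m t : ℕ} (h : t ≤ m) (f : ℕ → G) :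
    (∑ k ∈ Finset.range m, if k < t then f k else 0) = ∑ k ∈ Finset.range t, f k := by
  rw [← Finset.sum_range_add_sum_Ico (fun k => if k < t then f k else 0) h]
  rw [Finset.sum_congr rfl fun k hk => if_pos (Finset.mem_range.mp hk)]
  rw [Finset.sum_eq_zero fun k hk => if_neg (by have := (Finset.mem_Ico.mp hk).1 ; omega),
    add_zero]

/-! ### block functions on the controller index set -/

noncomputable def toCtr {nd : Fin (N+1) → ℕ}
    (f : Fin (N+1) → Fin (N+1) → Matrix (Idx nd) (Idx nd) ℝ) :
    Matrix (CtrIx nd) (CtrIx nd) ℝ :=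
  Matrix.of fun x y => f x.1 y.1 x.2 y.2

noncomputable def bmulF {nd : Fin (N+1) → ℕ}
    (f g : Fin (N+1) → Fin (N+1) → Matrix (Idx nd) (Idx nd) ℝ) :
    Fin (N+1) → Fin (N+1) → Matrix (Idx nd) (Idx nd) ℝ :=
  fun i j => ∑ k, f i k * g k j

theorem toCtr_mul {nd : Fin (N+1) → ℕ}
    (f g : Fin (N+1) → Fin (N+1) → Matrix (Idx nd) (Idx nd) ℝ) :
    toCtr f * toCtr g = toCtr (bmulF f g) := by
  ext x y
  simp only [toCtr, Matrix.mul_apply, Matrix.of_apply, bmulF, Matrix.sum_apply]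
  rw [Fintype.sum_prod_type]

theorem toCtr_add {nd : Fin (N+1) → ℕ}
    (f g : Fin (N+1) → Fin (N+1) → Matrix (Idx nd) (Idx nd) ℝ) :
    toCtr f + toCtr g = toCtr (fun i j => f i j + g i j) := by
  ext x y
  simp [toCtr]

theorem toCtr_one {nd : Fin (N+1) → ℕ} :
    toCtr (nd := nd) (fun i j => if i = j then 1 else 0) = 1 := by
  ext x y
  simp only [toCtr, Matrix.of_apply, Matrix.one_apply]
  by_cases h : x = y
  · subst h; simp
  · rw [if_neg h]
    by_cases h1 : x.1 = y.1
    · rw [if_pos h1, Matrix.one_apply, if_neg (fun h2 => h (Prod.ext h1 h2))]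
    · rw [if_neg h1]; rfl

noncomputable def zbF (nd : Fin (N+1) → ℕ) :
    Fin (N+1) → Fin (N+1) → Matrix (Idx nd) (Idx nd) ℝ :=
  fun i j => if j ≤ i then 1 else 0

noncomputable def mbF (nd : Fin (N+1) → ℕ) :
    Fin (N+1) → Fin (N+1) → Matrix (Idx nd) (Idx nd) ℝ :=
  fun i j => (if i = j then 1 else 0) - (if (i : ℕ) = (j : ℕ) + 1 then 1 else 0)

noncomputable def diagF {nd : Fin (N+1) → ℕ} (d : Fin (N+1) → Matrix (Idx nd) (Idx nd) ℝ) :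
    Fin (N+1) → Fin (N+1) → Matrix (Idx nd) (Idx nd) ℝ :=
  fun i j => if i = j then d i else 0

theorem zetaN_eq (nd : Fin (N+1) → ℕ) : zetaN nd = toCtr (zbF nd) := by
  ext x y
  simp only [zetaN, toCtr, zbF, Matrix.of_apply]
  by_cases h : y.1 ≤ x.1
  · simp [h, Matrix.one_apply]
  · simp [h]

theorem blkDiagN_eq {nd : Fin (N+1) → ℕ} (d : Fin (N+1) → Matrix (Idx nd) (Idx nd) ℝ) :
    blkDiagN d = toCtr (diagF d) := by
  ext x y
  simp only [blkDiagN, toCtr, diagF, Matrix.of_apply]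
  split_ifs <;> simp

theorem zeta_row {nd : Fin (N+1) → ℕ}
    (f g : Fin (N+1) → Matrix (Idx nd) (Idx nd) ℝ)
    (R : Fin (N+1) → Fin (N+1) → Matrix (Idx nd) (Idx nd) ℝ) (i j : Fin (N+1))
    (hR : ∀ k, R k j = (if k = j then f k else 0) - (if (k : ℕ) = (j : ℕ) + 1 then g k else 0)) :
    bmulF (zbF nd) R i j =
      (if j ≤ i then f j else 0) -
        (if h : (j : ℕ) + 1 < N + 1 then
          (if (j : ℕ) + 1 ≤ (i : ℕ) then g ⟨(j : ℕ) + 1, h⟩ else 0) else 0) := by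
  unfold bmulF zbF
  rw [Finset.sum_congr rfl fun k _ => by rw [ite_mul, one_mul, zero_mul, hR k]]
  rw [Finset.sum_congr rfl fun k _ =>
    show (if k ≤ i then
        ((if k = j then f k else 0) - (if (k : ℕ) = (j : ℕ) + 1 then g k else 0)) else 0) =
      ((if k = j then (if k ≤ i then f k else 0) else 0) -
        (if (k : ℕ) = (j : ℕ) + 1 then (if k ≤ i then g k else 0) else 0)) from by
      split_ifs <;> simp]
  rw [Finset.sum_sub_distrib]
  congr 1
  · rw [Finset.sum_ite_eq' Finset.univ j (fun k => if k ≤ i then f k else 0)]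
    simp
  · rw [sum_ite_val ((j : ℕ) + 1) (fun k => if k ≤ i then g k else 0)]
    by_cases h : (j : ℕ) + 1 < N + 1
    · rw [dif_pos h, dif_pos h]
      congr 1
      try simp [Fin.le_def]
    · rw [dif_neg h]
      rw [dif_neg h]

theorem zeta_mu {nd : Fin (N+1) → ℕ} (i j : Fin (N+1)) :
    bmulF (zbF nd) (mbF nd) i j = if i = j then 1 else 0 := by
  rw [zeta_row (fun _ => 1) (fun _ => 1) (mbF nd) i j (fun k => rfl)]
  have hi := i.isLt
  have hj := j.isLt
  by_cases h : (j : ℕ) + 1 < N + 1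
  · rw [dif_pos h]
    simp only [Fin.le_def, Fin.ext_iff]
    split_ifs <;> first | (exfalso; omega) | simp
  · rw [dif_neg h]
    simp only [Fin.le_def, Fin.ext_iff]
    split_ifs <;> first | (exfalso; omega) | simp

theorem zeta_mul_mu (nd : Fin (N+1) → ℕ) : zetaN nd * toCtr (mbF nd) = 1 := by
  rw [zetaN_eq, toCtr_mul]
  rw [show bmulF (zbF nd) (mbF nd) = fun i j => if i = j then 1 else 0 from
    funext fun i => funext fun j => zeta_mu i j]
  exact toCtr_one

theorem zetaN_inv (nd : Fin (N+1) → ℕ) : (zetaN nd)⁻¹ = toCtr (mbF nd) :=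
  Matrix.inv_eq_right_inv (zeta_mul_mu nd)

theorem zeta_diag_mu {nd : Fin (N+1) → ℕ}
    (d : Fin (N+1) → Matrix (Idx nd) (Idx nd) ℝ) (i j : Fin (N+1)) :
    bmulF (zbF nd) (bmulF (diagF d) (mbF nd)) i j =
      (if j ≤ i then d j else 0) -
        (if h : (j : ℕ) + 1 < N + 1 then
          (if (j : ℕ) + 1 ≤ (i : ℕ) then d ⟨(j : ℕ) + 1, h⟩ else 0) else 0) := by
  refine zeta_row d d _ i j fun k => ?_
  unfold bmulF diagF
  rw [Finset.sum_congr rfl fun v _ => by rw [ite_mul, zero_mul]]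
  rw [Finset.sum_ite_eq Finset.univ k (fun v => d k * mbF nd v j)]
  simp only [Finset.mem_univ, if_true]
  unfold mbF
  rw [mul_sub]
  simp only [mul_ite, mul_one, mul_zero]

/-! ### ℕ-indexed block data of the closed loop -/

noncomputable def BKn (P : Plant N) (K : KGains P) (k : ℕ) :
    Matrix (Idx P.nd) (Idx P.nd) ℝ :=
  if h : k < N + 1 then Bdown P ⟨k, h⟩ * K ⟨k, h⟩ else 0

noncomputable def LCn (P : Plant N) (L : LGains P) (k : ℕ) :
    Matrix (Idx P.nd) (Idx P.nd) ℝ :=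
  if h : k < N + 1 then L ⟨k, h⟩ * Cup P ⟨k, h⟩ else 0

noncomputable def Dn (P : Plant N) (K : KGains P) (k : ℕ) :
    Matrix (Idx P.nd) (Idx P.nd) ℝ :=
  BKn P K k - BKn P K (k + 1)

theorem BKn_fin (P : Plant N) (K : KGains P) (k : Fin (N+1)) :
    BKn P K (k : ℕ) = Bdown P k * K k := by
  unfold BKn
  rw [dif_pos k.isLt]

theorem LCn_fin (P : Plant N) (L : LGains P) (k : Fin (N+1)) :
    LCn P L (k : ℕ) = L k * Cup P k := by
  unfold LCn
  rw [dif_pos k.isLt]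

theorem BKn_top (P : Plant N) (K : KGains P) : BKn P K (N + 1) = 0 :=
  dif_neg (lt_irrefl _)

noncomputable def Ablk (P : Plant N) (K : KGains P) (L : LGains P) (i j : ℕ) :
    Matrix (Idx P.nd) (Idx P.nd) ℝ :=
  if i = N + 1 then (if j = N + 1 then P.A else Dn P K j)
  else if j = N + 1 then -(LCn P L i)
  else if i = j then P.A + LCn P L i + BKn P K i
  else if j < i then Dn P K j
  else 0

theorem Ablk_last_last (P : Plant N) (K : KGains P) (L : LGains P) :
    Ablk P K L (N+1) (N+1) = P.A := by
  unfold Ablk; rw [if_pos rfl, if_pos rfl]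

theorem Ablk_row_last (P : Plant N) (K : KGains P) (L : LGains P) {j : ℕ} (hj : j < N + 1) :
    Ablk P K L (N+1) j = Dn P K j := by
  unfold Ablk; rw [if_pos rfl, if_neg (by omega)]

theorem Ablk_col_last (P : Plant N) (K : KGains P) (L : LGains P) {i : ℕ} (hi : i < N + 1) :
    Ablk P K L i (N+1) = -(LCn P L i) := by
  unfold Ablk; rw [if_neg (by omega), if_pos rfl]

theorem Ablk_mid (P : Plant N) (K : KGains P) (L : LGains P) {i j : ℕ}
    (hi : i < N + 1) (hj : j < N + 1) :
    Ablk P K L i j =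
      if i = j then P.A + LCn P L i + BKn P K i else if j < i then Dn P K j else 0 := by
  unfold Ablk; rw [if_neg (by omega), if_neg (by omega)]

theorem AK_eq (P : Plant N) (K : KGains P) (L : LGains P) :
    AK P K L = toCtr (fun i j => Ablk P K L (i : ℕ) (j : ℕ)) := by
  unfold AK
  rw [zetaN_inv, zetaN_eq, blkDiagN_eq, blkDiagN_eq, blkDiagN_eq, Matrix.mul_assoc,
    toCtr_mul, toCtr_mul, toCtr_add, toCtr_add]
  refine congrArg toCtr (funext fun i => funext fun j => ?_)
  rw [zeta_diag_mu]
  have hi := i.isLt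
  have hj := j.isLt
  by_cases hij : (i : ℕ) = (j : ℕ)
  · have hij' : i = j := Fin.ext hij
    subst hij'
    rw [Ablk_mid P K L hi hj, if_pos rfl]
    unfold diagF
    rw [if_pos rfl, if_pos rfl, if_pos (le_refl i)]
    rw [show (if h : (i : ℕ) + 1 < N + 1 then
        (if (i : ℕ) + 1 ≤ (i : ℕ) then Bdown P ⟨(i : ℕ) + 1, h⟩ * K ⟨(i : ℕ) + 1, h⟩ else 0)
        else 0) = 0 from by split_ifs <;> first | rfl | (exfalso; omega)]
    rw [sub_zero, ← BKn_fin P K i]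
    simp [LCn_fin]
  · rw [Ablk_mid P K L hi hj, if_neg hij]
    unfold diagF
    rw [if_neg (fun hc => hij (congrArg Fin.val hc)),
      if_neg (fun hc => hij (congrArg Fin.val hc))]
    by_cases hji : (j : ℕ) < (i : ℕ)
    · have hjN : (j : ℕ) + 1 < N + 1 := by omega
      rw [if_pos hji, if_pos (Fin.le_def.mpr (by omega)), dif_pos hjN,
        if_pos (by omega : (j : ℕ) + 1 ≤ (i : ℕ))]
      unfold Dn
      rw [← BKn_fin P K j,
        show BKn P K ((j : ℕ) + 1) = Bdown P ⟨(j : ℕ) + 1, hjN⟩ * K ⟨(j : ℕ) + 1, hjN⟩ from by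
          unfold BKn; rw [dif_pos hjN]]
      abel
    · rw [if_neg hji, if_neg (fun hc => by have := Fin.le_def.mp hc; omega)]
      rw [show (if h : (j : ℕ) + 1 < N + 1 then
          (if (j : ℕ) + 1 ≤ (i : ℕ) then Bdown P ⟨(j : ℕ) + 1, h⟩ * K ⟨(j : ℕ) + 1, h⟩ else 0)
          else 0) = 0 from by split_ifs <;> first | rfl | (exfalso; omega)]
      simp

/-! ### entry formulas for the off-diagonal blocks of `𝒜` -/

theorem padLeT_C (P : Plant N) (i : Fin (N+1)) :
    (padLe P.pd i)ᵀ * P.C = Cup P i := by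
  ext c t
  rw [Matrix.mul_apply]
  simp only [Matrix.transpose_apply, padLe, Matrix.of_apply, ite_mul, one_mul, zero_mul]
  rw [Finset.sum_ite_eq' Finset.univ ((c : Idx P.pd)) (fun r => P.C r t)]
  simp [Cup]

theorem mul_padGe (P : Plant N) (i : Fin (N+1)) :
    P.B * padGe P.md i = Bdown P i := by
  ext t c
  rw [Matrix.mul_apply]
  simp only [padGe, Matrix.of_apply, mul_ite, mul_one, mul_zero]
  rw [Finset.sum_ite_eq' Finset.univ ((c : Idx P.md)) (fun r => P.B t r)]
  simp [Bdown]

theorem BKC_entry (P : Plant N) (L : LGains P) (u : CtrIx P.nd) (b : Idx P.nd) :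
    (BK P L * P.C) u b = -(LCn P L (u.1 : ℕ) u.2 b) := by
  rw [Matrix.mul_apply]
  rw [Finset.sum_congr rfl fun c _ =>
    show BK P L u c * P.C c b = -((L u.1 * (padLe P.pd u.1)ᵀ) u.2 c * P.C c b) from by
      simp [BK, neg_mul]]
  rw [Finset.sum_neg_distrib]
  congr 1
  rw [← Matrix.mul_apply, Matrix.mul_assoc, padLeT_C, LCn_fin]

theorem sum_mul_mu (P : Plant N) (K : KGains P) (i v : Fin (N+1)) :
    bmulF (nd := P.nd) (fun _ j => BKn P K (j : ℕ)) (mbF P.nd) i v = Dn P K (v : ℕ) := by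
  unfold bmulF mbF Dn
  simp only [mul_sub, mul_ite, mul_one, mul_zero]
  rw [Finset.sum_sub_distrib]
  congr 1
  · rw [Finset.sum_ite_eq' Finset.univ v (fun k => BKn P K (k : ℕ))]
    simp
  · rw [sum_ite_val ((v : ℕ) + 1) (fun k => BKn P K (k : ℕ))]
    by_cases h : (v : ℕ) + 1 < N + 1
    · rw [dif_pos h]
    · rw [dif_neg h]
      unfold BKn
      rw [dif_neg (by omega)]

theorem BCK_entry (P : Plant N) (K : KGains P) (a : Idx P.nd) (v : CtrIx P.nd) :
    (P.B * CK P K) a v = Dn P K (v.1 : ℕ) a v.2 := by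
  unfold CK
  rw [zetaN_inv, ← Matrix.mul_assoc, Matrix.mul_apply]
  have hpre : ∀ x : CtrIx P.nd,
      (P.B * Matrix.of fun rr (x : CtrIx P.nd) => (padGe P.md x.1 * K x.1) rr x.2) a x
        = BKn P K (x.1 : ℕ) a x.2 := by
    intro x
    rw [Matrix.mul_apply]
    simp only [Matrix.of_apply]
    rw [show (∑ rr, P.B a rr * (padGe P.md x.1 * K x.1) rr x.2)
        = (P.B * (padGe P.md x.1 * K x.1)) a x.2 from (Matrix.mul_apply).symm]
    rw [← Matrix.mul_assoc, mul_padGe, BKn_fin]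
  rw [show (∑ x : CtrIx P.nd,
        (P.B * Matrix.of fun rr (x : CtrIx P.nd) => (padGe P.md x.1 * K x.1) rr x.2) a x *
          toCtr (mbF P.nd) x v)
      = (toCtr (nd := P.nd) (fun _ j => BKn P K (j : ℕ)) * toCtr (mbF P.nd)) (⟨0, a⟩) v from by
    rw [Matrix.mul_apply]
    exact Finset.sum_congr rfl fun x _ => by rw [hpre x]; rfl]
  rw [toCtr_mul]
  show bmulF (nd := P.nd) (fun _ j => BKn P K (j : ℕ)) (mbF P.nd) 0 v.1 a v.2 = _
  rw [sum_mul_mu P K 0 v.1]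

/-! ### the (N+2)-fold block structure of the closed loop -/

noncomputable def bmul (N : ℕ) {G : Type*} [NonUnitalNonAssocSemiring G]
    (f g : ℕ → ℕ → G) : ℕ → ℕ → G :=
  fun i j => ∑ k ∈ Finset.range (N+2), f i k * g k j

noncomputable def toBlk {nd : Fin (N+1) → ℕ} (f : ℕ → ℕ → Matrix (Idx nd) (Idx nd) ℝ) :
    Matrix (BigIx nd) (BigIx nd) ℝ :=
  Matrix.of fun x y => f ((blkOf x : Fin (N+2)) : ℕ) ((blkOf y : Fin (N+2)) : ℕ) (stOf x) (stOf y)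

theorem toBlk_apply {nd : Fin (N+1) → ℕ} (f : ℕ → ℕ → Matrix (Idx nd) (Idx nd) ℝ)
    (x y : BigIx nd) :
    toBlk f x y
      = f ((blkOf x : Fin (N+2)) : ℕ) ((blkOf y : Fin (N+2)) : ℕ) (stOf x) (stOf y) := rfl

noncomputable def embn {nd : Fin (N+1) → ℕ} (k : ℕ) (a : Idx nd) : BigIx nd :=
  if h : k < N + 1 then Sum.inl ⟨⟨k, h⟩, a⟩ else Sum.inr a

theorem blkOf_embn {nd : Fin (N+1) → ℕ} (k : ℕ) (hk : k < N + 2) (a : Idx nd) :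
    ((blkOf (embn k a) : Fin (N+2)) : ℕ) = k := by
  unfold embn
  split_ifs with h
  · show ((Fin.castSucc ⟨k, h⟩ : Fin (N+2)) : ℕ) = k
    simp
  · show ((Fin.last (N+1) : Fin (N+2)) : ℕ) = k
    simp only [Fin.val_last]
    omega

theorem stOf_embn {nd : Fin (N+1) → ℕ} (k : ℕ) (a : Idx nd) : stOf (embn k a) = a := by
  unfold embn
  split_ifs <;> rfl

theorem embn_blkOf {nd : Fin (N+1) → ℕ} (x : BigIx nd) :
    embn ((blkOf x : Fin (N+2)) : ℕ) (stOf x) = x := by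
  cases x with
  | inl y =>
    show embn ((Fin.castSucc y.1 : Fin (N+2)) : ℕ) y.2 = Sum.inl y
    unfold embn
    rw [dif_pos (by simpa using y.1.isLt)]
    exact congrArg Sum.inl (Prod.ext (Fin.ext (by simp)) rfl)
  | inr a =>
    show embn ((Fin.last (N+1) : Fin (N+2)) : ℕ) a = Sum.inr a
    unfold embn
    rw [dif_neg (by simp)]

theorem embn_top {nd : Fin (N+1) → ℕ} (a : Idx nd) :
    embn (N+1) a = (Sum.inr a : BigIx nd) := by
  unfold embn
  rw [dif_neg (by omega)]

theorem sum_bigIx {nd : Fin (N+1) → ℕ} {G : Type*} [AddCommMonoid G] (h : BigIx nd → G) :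
    ∑ x : BigIx nd, h x = ∑ k ∈ Finset.range (N+2), ∑ a : Idx nd, h (embn k a) := by
  rw [Fintype.sum_sum_type, Finset.sum_range_succ]
  rw [Finset.sum_congr rfl fun a _ => congrArg h (embn_top a)]
  congr 1
  rw [← Fin.sum_univ_eq_sum_range (fun k => ∑ a : Idx nd, h (embn k a)) (N+1)]
  rw [Fintype.sum_prod_type]
  refine Finset.sum_congr rfl fun i _ => Finset.sum_congr rfl fun a _ => congrArg h ?_
  show Sum.inl (i, a) = embn (↑i) a
  unfold embn
  rw [dif_pos i.isLt]

theorem toBlk_mul {nd : Fin (N+1) → ℕ} (f g : ℕ → ℕ → Matrix (Idx nd) (Idx nd) ℝ) :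
    toBlk f * toBlk g = toBlk (bmul N f g) := by
  ext x y
  rw [Matrix.mul_apply]
  simp only [toBlk, Matrix.of_apply]
  rw [sum_bigIx (fun u => f (↑(blkOf x)) (↑(blkOf u)) (stOf x) (stOf u) *
    g (↑(blkOf u)) (↑(blkOf y)) (stOf u) (stOf y))]
  unfold bmul
  rw [Matrix.sum_apply]
  refine Finset.sum_congr rfl fun k hk => ?_
  rw [Matrix.mul_apply]
  refine Finset.sum_congr rfl fun a _ => ?_
  rw [blkOf_embn k (Finset.mem_range.mp hk), stOf_embn]

theorem toBlk_congr {nd : Fin (N+1) → ℕ} {f g : ℕ → ℕ → Matrix (Idx nd) (Idx nd) ℝ}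
    (h : ∀ i j, i < N + 2 → j < N + 2 → f i j = g i j) : toBlk f = toBlk g := by
  ext x y
  simp only [toBlk, Matrix.of_apply]
  rw [h _ _ (blkOf x).isLt (blkOf y).isLt]

theorem toBlk_one {nd : Fin (N+1) → ℕ} :
    toBlk (nd := nd) (fun i j => if i = j then 1 else 0) = 1 := by
  ext x y
  simp only [toBlk, Matrix.of_apply, Matrix.one_apply]
  by_cases hxy : x = y
  · subst hxy; simp
  · rw [if_neg hxy]
    by_cases hb : ((blkOf x : Fin (N+2)) : ℕ) = ((blkOf y : Fin (N+2)) : ℕ)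
    · rw [if_pos hb, Matrix.one_apply,
        if_neg fun hs => hxy (by rw [← embn_blkOf x, ← embn_blkOf y, hb, hs])]
    · rw [if_neg hb]; rfl

theorem Acal_eq (P : Plant N) (K : KGains P) (L : LGains P) :
    Acal P K L = toBlk (Ablk P K L) := by
  unfold Acal
  ext x y
  cases x with
  | inl u =>
    cases y with
    | inl v =>
      rw [Matrix.fromBlocks_apply₁₁, AK_eq]
      show Ablk P K L (↑u.1) (↑v.1) u.2 v.2
        = Ablk P K L ((Fin.castSucc u.1 : Fin (N+2)) : ℕ) ((Fin.castSucc v.1 : Fin (N+2)) : ℕ)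
            u.2 v.2
      rw [Fin.coe_castSucc, Fin.coe_castSucc]
    | inr b =>
      rw [Matrix.fromBlocks_apply₁₂, BKC_entry]
      show _ = Ablk P K L ((Fin.castSucc u.1 : Fin (N+2)) : ℕ) ((Fin.last (N+1) : Fin (N+2)) : ℕ)
          u.2 b
      rw [Fin.coe_castSucc, Fin.val_last, Ablk_col_last P K L u.1.isLt, Matrix.neg_apply]
  | inr a =>
    cases y with
    | inl v =>
      rw [Matrix.fromBlocks_apply₂₁, BCK_entry]
      show _ = Ablk P K L ((Fin.last (N+1) : Fin (N+2)) : ℕ) ((Fin.castSucc v.1 : Fin (N+2)) : ℕ)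
          a v.2
      rw [Fin.val_last, Fin.coe_castSucc, Ablk_row_last P K L v.1.isLt]
    | inr b =>
      rw [Matrix.fromBlocks_apply₂₂]
      show _ = Ablk P K L ((Fin.last (N+1) : Fin (N+2)) : ℕ) ((Fin.last (N+1) : Fin (N+2)) : ℕ)
          a b
      rw [Fin.val_last, Ablk_last_last]
/-! ### the triangularizing transformation -/

noncomputable def Tbf (nd : Fin (N+1) → ℕ) (i j : ℕ) : Matrix (Idx nd) (Idx nd) ℝ :=
  if i = N + 1 then (if j = N + 1 then 1 else 0)
  else if j = N + 1 ∨ j = 0 ∨ i < j then 1 else 0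

noncomputable def Tibf (nd : Fin (N+1) → ℕ) (i j : ℕ) : Matrix (Idx nd) (Idx nd) ℝ :=
  if i = N + 1 then (if j = N + 1 then 1 else 0)
  else if i = 0 then (if j = N then 1 else 0) - (if j = N + 1 then 1 else 0)
  else (if j + 1 = i then 1 else 0) - (if j = i then 1 else 0)

theorem tib_row {nd : Fin (N+1) → ℕ} (X : ℕ → ℕ → Matrix (Idx nd) (Idx nd) ℝ)
    (i j : ℕ) (hi : i < N + 2) :
    bmul N (Tibf nd) X i j =
      if i = N + 1 then X (N+1) j
      else if i = 0 then X N j - X (N+1) j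
      else X (i-1) j - X i j := by
  unfold bmul
  by_cases h1 : i = N + 1
  · subst h1
    rw [if_pos rfl]
    rw [Finset.sum_congr rfl fun k _ =>
      show Tibf nd (N+1) k * X k j = if k = N+1 then X k j else 0 from by
        unfold Tibf; rw [if_pos rfl, ite_mul, one_mul, zero_mul]]
    exact sum_pick (by omega) _
  · rw [if_neg h1]
    by_cases h0 : i = 0
    · subst h0
      rw [if_pos rfl]
      rw [Finset.sum_congr rfl fun k _ =>
        show Tibf nd 0 k * X k j
            = (if k = N then X k j else 0) - (if k = N+1 then X k j else 0) from by
          unfold Tibf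
          rw [if_neg (by omega), if_pos rfl, sub_mul, ite_mul, ite_mul, one_mul, zero_mul]]
      rw [Finset.sum_sub_distrib, sum_pick (by omega) _, sum_pick (by omega) _]
    · rw [if_neg h0]
      rw [Finset.sum_congr rfl fun k _ =>
        show Tibf nd i k * X k j
            = (if k = i - 1 then X k j else 0) - (if k = i then X k j else 0) from by
          unfold Tibf
          rw [if_neg h1, if_neg h0, sub_mul, ite_mul, ite_mul, one_mul, zero_mul]
          congr 1
          exact if_congr (by omega) rfl rfl]
      rw [Finset.sum_sub_distrib, sum_pick (by omega) _, sum_pick (by omega) _]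

theorem tib_tb (nd : Fin (N+1) → ℕ) (i j : ℕ) (hi : i < N + 2) (hj : j < N + 2) :
    bmul N (Tibf nd) (Tbf nd) i j = if i = j then 1 else 0 := by
  rw [tib_row (Tbf nd) i j hi]
  by_cases h1 : i = N + 1
  · rw [if_pos h1]
    subst h1
    unfold Tbf
    rw [if_pos rfl]
    exact if_congr eq_comm rfl rfl
  · rw [if_neg h1]
    by_cases h0 : i = 0
    · rw [if_pos h0]
      subst h0
      unfold Tbf
      rw [if_neg (by omega : ¬N = N + 1), if_pos rfl]
      split_ifs <;> first | (exfalso; omega) | simp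
    · rw [if_neg h0]
      unfold Tbf
      rw [if_neg (by omega : ¬i - 1 = N + 1), if_neg h1]
      split_ifs <;> first | (exfalso; omega) | simp

/-! ### the conjugated closed-loop matrix -/

noncomputable def Sf (P : Plant N) (K : KGains P) (L : LGains P) (i j : ℕ) :
    Matrix (Idx P.nd) (Idx P.nd) ℝ :=
  if j = N + 1 then P.A + BKn P K 0
  else if j = 0 then (if i = N + 1 then BKn P K 0 else P.A + BKn P K 0 + LCn P L i)
  else if i = N + 1 ∨ j ≤ i then BKn P K 0 - BKn P K j
  else P.A + LCn P L i + BKn P K 0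

theorem Sf_last_col (P : Plant N) (K : KGains P) (L : LGains P) (i : ℕ) :
    Sf P K L i (N+1) = P.A + BKn P K 0 := by
  unfold Sf; rw [if_pos rfl]

theorem Sf_zero_col_last (P : Plant N) (K : KGains P) (L : LGains P) :
    Sf P K L (N+1) 0 = BKn P K 0 := by
  unfold Sf; rw [if_neg (by omega), if_pos rfl, if_pos rfl]

theorem Sf_zero_col (P : Plant N) (K : KGains P) (L : LGains P) (i : ℕ) (h : i ≠ N + 1) :
    Sf P K L i 0 = P.A + BKn P K 0 + LCn P L i := by
  unfold Sf; rw [if_neg (by omega), if_pos rfl, if_neg h]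

theorem Sf_mid_le (P : Plant N) (K : KGains P) (L : LGains P) (i j : ℕ)
    (h0 : j ≠ 0) (h1 : j ≠ N + 1) (hle : i = N + 1 ∨ j ≤ i) :
    Sf P K L i j = BKn P K 0 - BKn P K j := by
  unfold Sf; rw [if_neg h1, if_neg h0, if_pos hle]

theorem Sf_mid_gt (P : Plant N) (K : KGains P) (L : LGains P) (i j : ℕ)
    (h0 : j ≠ 0) (h1 : j ≠ N + 1) (hiN : i ≠ N + 1) (hgt : ¬j ≤ i) :
    Sf P K L i j = P.A + LCn P L i + BKn P K 0 := by
  unfold Sf; rw [if_neg h1, if_neg h0, if_neg (not_or.mpr ⟨hiN, hgt⟩)]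

theorem sum_Dn (P : Plant N) (K : KGains P) (t : ℕ) :
    (∑ k ∈ Finset.range t, Dn P K k) = BKn P K 0 - BKn P K t := by
  rw [Finset.sum_congr rfl fun k _ => show Dn P K k = BKn P K k - BKn P K (k+1) from rfl]
  exact Finset.sum_range_sub' (BKn P K) t

theorem rowsum (P : Plant N) (K : KGains P) (L : LGains P) (i : ℕ) (hi : i < N + 2) :
    (∑ k ∈ Finset.range (N+1), Ablk P K L i k) =
      if i = N + 1 then BKn P K 0 else P.A + BKn P K 0 + LCn P L i := by
  by_cases h : i = N + 1
  · subst h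
    rw [if_pos rfl]
    rw [Finset.sum_congr rfl fun k hk => Ablk_row_last P K L (Finset.mem_range.mp hk)]
    rw [sum_Dn, BKn_top, sub_zero]
  · rw [if_neg h]
    have hi' : i < N + 1 := by omega
    rw [Finset.sum_congr rfl fun k hk =>
      show Ablk P K L i k
          = (if i = k then P.A + LCn P L i + BKn P K i else 0) + (if k < i then Dn P K k else 0)
        from by
        rw [Ablk_mid P K L hi' (Finset.mem_range.mp hk)]
        split_ifs <;> first | (exfalso; omega) | simp]
    rw [Finset.sum_add_distrib]
    rw [Finset.sum_ite_eq (Finset.range (N+1)) i fun _ => P.A + LCn P L i + BKn P K i]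
    rw [if_pos (Finset.mem_range.mpr hi')]
    rw [sum_range_ite_lt (by omega) (Dn P K), sum_Dn]
    abel

theorem sb_eq (P : Plant N) (K : KGains P) (L : LGains P) (i j : ℕ)
    (hi : i < N + 2) (hj : j < N + 2) :
    bmul N (Ablk P K L) (Tbf P.nd) i j = Sf P K L i j := by
  unfold bmul
  by_cases hj1 : j = N + 1
  · subst hj1
    rw [Finset.sum_congr rfl fun k _ =>
      show Ablk P K L i k * Tbf P.nd k (N+1) = Ablk P K L i k from by
        unfold Tbf; split_ifs <;> first | rw [mul_one] | (exfalso; omega)]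
    rw [Finset.sum_range_succ, rowsum P K L i hi, Sf_last_col]
    by_cases h : i = N + 1
    · subst h
      rw [if_pos rfl, Ablk_last_last]
      abel
    · rw [if_neg h, Ablk_col_last P K L (by omega)]
      abel
  · rw [Finset.sum_range_succ,
      show Ablk P K L i (N+1) * Tbf P.nd (N+1) j = 0 from by
        unfold Tbf; rw [if_pos rfl, if_neg hj1, mul_zero],
      add_zero]
    by_cases hj0 : j = 0
    · subst hj0
      rw [Finset.sum_congr rfl fun k hk =>
        show Ablk P K L i k * Tbf P.nd k 0 = Ablk P K L i k from by
          unfold Tbf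
          rw [if_neg (by have := Finset.mem_range.mp hk; omega), if_pos (by omega), mul_one]]
      rw [rowsum P K L i hi]
      by_cases h : i = N + 1
      · rw [if_pos h, h, Sf_zero_col_last]
      · rw [if_neg h, Sf_zero_col P K L i h]
    · rw [Finset.sum_congr rfl fun k hk =>
        show Ablk P K L i k * Tbf P.nd k j = if k < j then Ablk P K L i k else 0 from by
          unfold Tbf
          rw [if_neg (by have := Finset.mem_range.mp hk; omega), mul_ite, mul_one, mul_zero]
          exact if_congr (by omega) rfl rfl]
      rw [sum_range_ite_lt (by omega : j ≤ N + 1) (Ablk P K L i)]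
      by_cases hiN : i = N + 1
      · rw [Sf_mid_le P K L i j hj0 hj1 (Or.inl hiN)]
        subst hiN
        rw [Finset.sum_congr rfl fun k hk =>
          Ablk_row_last P K L (by have := Finset.mem_range.mp hk; omega)]
        exact sum_Dn P K j
      · by_cases hji : j ≤ i
        · rw [Sf_mid_le P K L i j hj0 hj1 (Or.inr hji)]
          rw [Finset.sum_congr rfl fun k hk =>
            show Ablk P K L i k = Dn P K k from by
              have hk' := Finset.mem_range.mp hk
              rw [Ablk_mid P K L (by omega) (by omega), if_neg (by omega), if_pos (by omega)]]
          exact sum_Dn P K j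
        · rw [Sf_mid_gt P K L i j hj0 hj1 hiN hji]
          rw [Finset.sum_congr rfl fun k hk =>
            show Ablk P K L i k
                = (if i = k then P.A + LCn P L i + BKn P K i else 0) +
                    (if k < i then Dn P K k else 0) from by
              have hk' := Finset.mem_range.mp hk
              rw [Ablk_mid P K L (by omega) (by omega)]
              split_ifs <;> first | (exfalso; omega) | simp]
          rw [Finset.sum_add_distrib]
          rw [Finset.sum_ite_eq (Finset.range j) i fun _ => P.A + LCn P L i + BKn P K i]
          rw [if_pos (Finset.mem_range.mpr (by omega))]
          rw [sum_range_ite_lt (by omega : i ≤ j) (Dn P K), sum_Dn]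
          abel

/-! ### triangularity and the diagonal blocks -/

def gnat (N t : ℕ) : ℕ := if t = N + 1 then 0 else if t = 0 then N + 1 else t

theorem gnat_lt {N t : ℕ} (h : t < N + 2) : gnat N t < N + 2 := by
  unfold gnat; split_ifs <;> omega

theorem gnat_invol {N t : ℕ} (h : t < N + 2) : gnat N (gnat N t) = t := by
  unfold gnat
  by_cases h1 : t = N + 1
  · rw [if_pos h1, if_neg (by omega : ¬(0:ℕ) = N + 1), if_pos rfl]
    omega
  · rw [if_neg h1]
    by_cases h0 : t = 0
    · rw [if_pos h0, if_pos rfl]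
      omega
    · rw [if_neg h0, if_neg h1, if_neg h0]

noncomputable def AKLc (P : Plant N) (K : KGains P) (L : LGains P) (t : ℕ) :
    Matrix (Idx P.nd) (Idx P.nd) ℝ :=
  if t = N + 1 then P.A + LCn P L N
  else if t = 0 then P.A + BKn P K 0
  else P.A + BKn P K t + LCn P L (t - 1)

theorem mblk_eval (P : Plant N) (K : KGains P) (L : LGains P) (i j : ℕ)
    (hi : i < N + 2) (hj : j < N + 2) :
    bmul N (Tibf P.nd) (bmul N (Ablk P K L) (Tbf P.nd)) i j =
      if i = N + 1 then Sf P K L (N+1) j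
      else if i = 0 then Sf P K L N j - Sf P K L (N+1) j
      else Sf P K L (i-1) j - Sf P K L i j := by
  rw [tib_row _ i j hi]
  split_ifs with h1 h0
  · rw [sb_eq P K L (N+1) j (by omega) hj]
  · rw [sb_eq P K L N j (by omega) hj, sb_eq P K L (N+1) j (by omega) hj]
  · rw [sb_eq P K L (i-1) j (by omega) hj, sb_eq P K L i j hi hj]

theorem mblk_tri (P : Plant N) (K : KGains P) (L : LGains P) (i j : ℕ)
    (hi : i < N + 2) (hj : j < N + 2) (hlt : gnat N j < gnat N i) :
    bmul N (Tibf P.nd) (bmul N (Ablk P K L) (Tbf P.nd)) i j = 0 := by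
  rw [mblk_eval P K L i j hi hj]
  unfold gnat at hlt
  by_cases h1 : i = N + 1
  · exfalso; rw [if_pos h1] at hlt; omega
  · rw [if_neg h1]
    rw [if_neg h1] at hlt
    by_cases h0 : i = 0
    · rw [if_pos h0]
      rw [if_pos h0] at hlt
      by_cases hj1 : j = N + 1
      · rw [hj1, Sf_last_col, Sf_last_col, sub_self]
      · rw [if_neg hj1] at hlt
        by_cases hj0 : j = 0
        · rw [if_pos hj0] at hlt; exfalso; omega
        · rw [if_neg hj0] at hlt
          rw [Sf_mid_le P K L N j hj0 hj1 (Or.inr (by omega)),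
            Sf_mid_le P K L (N+1) j hj0 hj1 (Or.inl rfl), sub_self]
    · rw [if_neg h0]
      rw [if_neg h0] at hlt
      by_cases hj1 : j = N + 1
      · rw [hj1, Sf_last_col, Sf_last_col, sub_self]
      · rw [if_neg hj1] at hlt
        by_cases hj0 : j = 0
        · rw [if_pos hj0] at hlt; exfalso; omega
        · rw [if_neg hj0] at hlt
          rw [Sf_mid_le P K L (i-1) j hj0 hj1 (Or.inr (by omega)),
            Sf_mid_le P K L i j hj0 hj1 (Or.inr (by omega)), sub_self]

theorem mblk_diag (P : Plant N) (K : KGains P) (L : LGains P) (i : ℕ) (hi : i < N + 2) :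
    bmul N (Tibf P.nd) (bmul N (Ablk P K L) (Tbf P.nd)) i i = AKLc P K L (gnat N i) := by
  rw [mblk_eval P K L i i hi hi]
  by_cases h1 : i = N + 1
  · subst h1
    rw [if_pos rfl, Sf_last_col]
    rw [show gnat N (N+1) = 0 from by unfold gnat; rw [if_pos rfl]]
    unfold AKLc
    rw [if_neg (by omega), if_pos rfl]
  · rw [if_neg h1]
    by_cases h0 : i = 0
    · subst h0
      rw [if_pos rfl, Sf_zero_col P K L N (by omega), Sf_zero_col_last]
      rw [show gnat N 0 = N + 1 from by unfold gnat; rw [if_neg (by omega), if_pos rfl]]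
      unfold AKLc
      rw [if_pos rfl]
      abel
    · rw [if_neg h0]
      rw [Sf_mid_gt P K L (i-1) i h0 h1 (by omega) (by omega)]
      rw [Sf_mid_le P K L i i h0 h1 (Or.inr le_rfl)]
      rw [show gnat N i = i from by unfold gnat; rw [if_neg h1, if_neg h0]]
      unfold AKLc
      rw [if_neg h1, if_neg h0]
      abel

theorem AKL_eq (P : Plant N) (K : KGains P) (L : LGains P) (k : Fin (N+2)) :
    AKL P K L k = AKLc P K L (k : ℕ) := by
  unfold AKL AKLc
  by_cases hlt : (k : ℕ) < N + 1
  · rw [dif_pos hlt]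
    by_cases h0 : (k : ℕ) = 0
    · rw [if_pos h0, if_neg (by omega), if_pos h0]
      have e : BKn P K (0 : ℕ) = Bdown P 0 * K 0 := by
        have := BKn_fin P K 0
        rwa [Fin.val_zero] at this
      rw [e]
    · rw [if_neg h0, if_neg (by omega), if_neg h0]
      have e1 : BKn P K (k : ℕ) = Bdown P ⟨(k : ℕ), hlt⟩ * K ⟨(k : ℕ), hlt⟩ := by
        unfold BKn; rw [dif_pos hlt]
      have hk1 : (k : ℕ) - 1 < N + 1 := by omega
      have e2 : LCn P L ((k : ℕ) - 1)
          = L ⟨(k : ℕ) - 1, hk1⟩ * Cup P ⟨(k : ℕ) - 1, hk1⟩ := by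
        unfold LCn; rw [dif_pos hk1]
      rw [e1, e2]
  · rw [dif_neg hlt, if_pos (by omega : (k : ℕ) = N + 1)]
    have e : LCn P L N = L (Fin.last N) * Cup P (Fin.last N) := by
      have := LCn_fin P L (Fin.last N)
      rwa [Fin.val_last] at this
    rw [e]
/-! ### complexification and the spectral argument -/

theorem mc_mul {a b c : Type*} [Fintype b] (M : Matrix a b ℝ) (M' : Matrix b c ℝ) :
    mc (M * M') = mc M * mc M' :=
  Matrix.map_mul (f := Complex.ofRealHom)

theorem mc_one {t : Type*} [Fintype t] [DecidableEq t] : mc (1 : Matrix t t ℝ) = 1 :=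
  Matrix.map_one _ Complex.ofReal_zero Complex.ofReal_one

theorem mc_apply {a b : Type*} (M : Matrix a b ℝ) (i : a) (j : b) :
    mc M i j = Complex.ofReal (M i j) := rfl

set_option maxHeartbeats 1000000 in
theorem main {N : ℕ} (P : Plant N) (K : KGains P) (L : LGains P)
    (h : ∀ k : Fin (N+2), IsHurwitz (AKL P K L k)) :
    IsHurwitz (Acal P K L) := by
  classical
  intro z hz
  have h1 : toBlk (Tibf P.nd) * toBlk (Tbf P.nd) = 1 := by
    rw [toBlk_mul,
      show toBlk (bmul N (Tibf P.nd) (Tbf P.nd))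
          = toBlk (nd := P.nd) (fun i j => if i = j then 1 else 0) from
        toBlk_congr fun i j hi hj => tib_tb P.nd i j hi hj]
    exact toBlk_one
  have h2 : toBlk (Tbf P.nd) * toBlk (Tibf P.nd) = 1 := mul_eq_one_comm.mp h1
  have hM : toBlk (Tibf P.nd) * (Acal P K L * toBlk (Tbf P.nd))
      = toBlk (bmul N (Tibf P.nd) (bmul N (Ablk P K L) (Tbf P.nd))) := by
    rw [Acal_eq P K L, toBlk_mul, toBlk_mul]
  have h1c : mc (toBlk (Tibf P.nd)) * mc (toBlk (Tbf P.nd)) = 1 := by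
    rw [← mc_mul, h1, mc_one]
  have h2c : mc (toBlk (Tbf P.nd)) * mc (toBlk (Tibf P.nd)) = 1 := by
    rw [← mc_mul, h2, mc_one]
  let U : (Matrix (BigIx P.nd) (BigIx P.nd) ℂ)ˣ :=
    ⟨mc (toBlk (Tbf P.nd)), mc (toBlk (Tibf P.nd)), h2c, h1c⟩
  let V : (Matrix (BigIx P.nd) (BigIx P.nd) ℂ)ˣ :=
    ⟨mc (toBlk (Tibf P.nd)), mc (toBlk (Tbf P.nd)), h1c, h2c⟩
  have keyU : ∀ Y : Matrix (BigIx P.nd) (BigIx P.nd) ℂ,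
      IsUnit (mc (toBlk (Tibf P.nd)) * Y * mc (toBlk (Tbf P.nd))) ↔ IsUnit Y := fun Y =>
    (Units.isUnit_mul_units (mc (toBlk (Tibf P.nd)) * Y) U).trans (Units.isUnit_units_mul V Y)
  have hz' : z ∈ spectrum ℂ (mc (toBlk (bmul N (Tibf P.nd) (bmul N (Ablk P K L) (Tbf P.nd))))) := by
    rw [spectrum.mem_iff] at hz ⊢
    intro hcon
    apply hz
    have hMc : mc (toBlk (bmul N (Tibf P.nd) (bmul N (Ablk P K L) (Tbf P.nd))))
        = mc (toBlk (Tibf P.nd)) * mc (Acal P K L) * mc (toBlk (Tbf P.nd)) := by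
      rw [← hM, mc_mul, mc_mul, ← Matrix.mul_assoc]
    have hfact : algebraMap ℂ (Matrix (BigIx P.nd) (BigIx P.nd) ℂ) z -
          mc (toBlk (bmul N (Tibf P.nd) (bmul N (Ablk P K L) (Tbf P.nd))))
        = mc (toBlk (Tibf P.nd)) *
            (algebraMap ℂ (Matrix (BigIx P.nd) (BigIx P.nd) ℂ) z - mc (Acal P K L)) *
            mc (toBlk (Tbf P.nd)) := by
      rw [hMc, mul_sub, sub_mul,
        show mc (toBlk (Tibf P.nd)) * algebraMap ℂ (Matrix (BigIx P.nd) (BigIx P.nd) ℂ) z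
            = algebraMap ℂ (Matrix (BigIx P.nd) (BigIx P.nd) ℂ) z * mc (toBlk (Tibf P.nd)) from
          (Algebra.commutes z (mc (toBlk (Tibf P.nd)))).symm,
        Matrix.mul_assoc (algebraMap ℂ (Matrix (BigIx P.nd) (BigIx P.nd) ℂ) z)
          (mc (toBlk (Tibf P.nd))) (mc (toBlk (Tbf P.nd))),
        h1c, Matrix.mul_one]
    rw [hfact] at hcon
    exact (keyU _).mp hcon
  have hdet : (algebraMap ℂ (Matrix (BigIx P.nd) (BigIx P.nd) ℂ) z -
      mc (toBlk (bmul N (Tibf P.nd) (bmul N (Ablk P K L) (Tbf P.nd))))).det = 0 := by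
    by_contra hc
    exact (spectrum.mem_iff.mp hz')
      ((Matrix.isUnit_iff_isUnit_det _).mpr (isUnit_iff_ne_zero.mpr hc))
  have htri : (algebraMap ℂ (Matrix (BigIx P.nd) (BigIx P.nd) ℂ) z -
      mc (toBlk (bmul N (Tibf P.nd) (bmul N (Ablk P K L) (Tbf P.nd))))).BlockTriangular
      (fun x : BigIx P.nd => (⟨gnat N ((blkOf x : Fin (N+2)) : ℕ),
        gnat_lt (blkOf x).isLt⟩ : Fin (N+2))) := by
    intro x y hxy
    have hxy' : x ≠ y := by
      intro he; rw [he] at hxy; exact lt_irrefl _ hxy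
    have hg : gnat N ((blkOf y : Fin (N+2)) : ℕ) < gnat N ((blkOf x : Fin (N+2)) : ℕ) := hxy
    rw [Matrix.sub_apply, Matrix.algebraMap_matrix_apply, if_neg hxy', zero_sub, neg_eq_zero,
      mc_apply, toBlk_apply, mblk_tri P K L _ _ (blkOf x).isLt (blkOf y).isLt hg]
    simp
  have hprod : (∏ k : Fin (N+2),
      ((algebraMap ℂ (Matrix (BigIx P.nd) (BigIx P.nd) ℂ) z -
        mc (toBlk (bmul N (Tibf P.nd) (bmul N (Ablk P K L) (Tbf P.nd))))).toSquareBlock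
        (fun x : BigIx P.nd => (⟨gnat N ((blkOf x : Fin (N+2)) : ℕ),
          gnat_lt (blkOf x).isLt⟩ : Fin (N+2))) k).det) = 0 := by
    rw [← htri.det_fintype]
    exact hdet
  obtain ⟨k, -, hk0⟩ := Finset.prod_eq_zero_iff.mp hprod
  have hginv : gnat N (gnat N (k : ℕ)) = (k : ℕ) := gnat_invol k.isLt
  let ek : Idx P.nd ≃ {x : BigIx P.nd //
      (⟨gnat N ((blkOf x : Fin (N+2)) : ℕ), gnat_lt (blkOf x).isLt⟩ : Fin (N+2)) = k} :=
    { toFun := fun a => ⟨embn (gnat N (k : ℕ)) a, by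
        apply Fin.ext
        show gnat N ((blkOf (embn (gnat N (k : ℕ)) a) : Fin (N+2)) : ℕ) = (k : ℕ)
        rw [blkOf_embn _ (gnat_lt k.isLt) a, hginv]⟩
      invFun := fun x => stOf x.1
      left_inv := fun a => stOf_embn _ a
      right_inv := fun x => by
        apply Subtype.ext
        show embn (gnat N (k : ℕ)) (stOf x.1) = x.1
        have hx : gnat N ((blkOf x.1 : Fin (N+2)) : ℕ) = (k : ℕ) := congrArg Fin.val x.2
        have hb : ((blkOf x.1 : Fin (N+2)) : ℕ) = gnat N (k : ℕ) := by
          rw [← hx, gnat_invol (blkOf x.1).isLt]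
        rw [← hb]
        exact embn_blkOf x.1 }
  have hW : ((algebraMap ℂ (Matrix (BigIx P.nd) (BigIx P.nd) ℂ) z -
        mc (toBlk (bmul N (Tibf P.nd) (bmul N (Ablk P K L) (Tbf P.nd))))).toSquareBlock
        (fun x : BigIx P.nd => (⟨gnat N ((blkOf x : Fin (N+2)) : ℕ),
          gnat_lt (blkOf x).isLt⟩ : Fin (N+2))) k)
      = ((algebraMap ℂ (Matrix (Idx P.nd) (Idx P.nd) ℂ) z -
          mc (AKL P K L k)).submatrix (fun x => stOf x.1) (fun x => stOf x.1)) := by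
    ext xs ys
    have hbx : ((blkOf xs.1 : Fin (N+2)) : ℕ) = gnat N (k : ℕ) := by
      have h' : gnat N ((blkOf xs.1 : Fin (N+2)) : ℕ) = (k : ℕ) := congrArg Fin.val xs.2
      rw [← h', gnat_invol (blkOf xs.1).isLt]
    have hby : ((blkOf ys.1 : Fin (N+2)) : ℕ) = gnat N (k : ℕ) := by
      have h' : gnat N ((blkOf ys.1 : Fin (N+2)) : ℕ) = (k : ℕ) := congrArg Fin.val ys.2
      rw [← h', gnat_invol (blkOf ys.1).isLt]
    rw [Matrix.toSquareBlock_def]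
    simp only [Matrix.of_apply, Matrix.submatrix_apply, Matrix.sub_apply,
      Matrix.algebraMap_matrix_apply, mc_apply, toBlk_apply]
    rw [hbx, hby, mblk_diag P K L _ (gnat_lt k.isLt), hginv, ← AKL_eq P K L k]
    congr 1
    refine if_congr ?_ rfl rfl
    constructor
    · intro he
      show stOf xs.1 = stOf ys.1
      rw [he]
    · intro he
      rw [← embn_blkOf xs.1, ← embn_blkOf ys.1, hbx, hby]
      show embn (gnat N (k : ℕ)) (stOf xs.1) = embn (gnat N (k : ℕ)) (stOf ys.1)
      rw [show stOf xs.1 = stOf ys.1 from he]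
  have hWdet : (algebraMap ℂ (Matrix (Idx P.nd) (Idx P.nd) ℂ) z - mc (AKL P K L k)).det = 0 := by
    rw [hW] at hk0
    rw [show ((algebraMap ℂ (Matrix (Idx P.nd) (Idx P.nd) ℂ) z -
          mc (AKL P K L k)).submatrix
            (fun x : {x : BigIx P.nd //
                (⟨gnat N ((blkOf x : Fin (N+2)) : ℕ), gnat_lt (blkOf x).isLt⟩ : Fin (N+2)) = k}
              => stOf x.1) (fun x => stOf x.1))
        = ((algebraMap ℂ (Matrix (Idx P.nd) (Idx P.nd) ℂ) z -
          mc (AKL P K L k)).submatrix (⇑ek.symm) (⇑ek.symm)) from rfl,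
      Matrix.det_submatrix_equiv_self ek.symm] at hk0
    exact hk0
  have hzk : z ∈ spectrum ℂ (mc (AKL P K L k)) := by
    rw [spectrum.mem_iff]
    intro hc
    rw [Matrix.isUnit_iff_isUnit_det, hWdet] at hc
    exact not_isUnit_zero hc
  exact h k z hzk

end Stmt4


/-- if all `A^{KL}_{k,k−1}` are Hurwitz then the closed-loop matrix `𝒜` is
Hurwitz, i.e. the controller `(A_K, B_K, C_K)` internally stabilizes the plant. -/
theorem stmt4 {N : ℕ} (P : Plant N)
    (hdim : ∀ k : Fin (N+1), 0 < P.nd k ∧ 0 < P.md k ∧ 0 < P.pd k)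
    (K : KGains P) (L : LGains P)
    (h : ∀ k : Fin (N+2), IsHurwitz (AKL P K L k)) :
    IsHurwitz (Acal P K L) := by
  exact Stmt4.main P K L h


end TriLQG
end

section
/- Suppose (X_i, K_i)_{i=1}^N and (Y_i, L_i)_{i=1}^N satisfy the coupled Riccati system and H has full column rank. Then for every i ∈ {1,…,N} and every s ∈ ℂ not in the spectrum of 𝒜 nor in the spectrum of A^{KL}_{k,k−1} for any k = 1,…,i, the following factorization of the closed-loop transfer function from control input to performance output holds: (ℱ(sI − 𝒜)^{-1}ℬ + H)·E^{↓i} = U_1(s)·U_2(s)⋯U_i(s)·M_i^{-1}(s), where M_i^{-1}(s) := (Ψ_{↓i}^{↓i})^{1/2} − (Ψ_{↓i}^{↓i})^{1/2} 𝒦_i (sI − 𝒜)^{-1} ℬE^{↓i} and E^{↓i} is taken in the m-partition. -/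
open Matrix

namespace TriLQG
noncomputable section Aux

open Matrix

variable {N : ℕ}

/-! ### complexification lemmas -/

lemma mc_mul {α β γ : Type*} [Fintype β] (A : Matrix α β ℝ) (B : Matrix β γ ℝ) :
    mc (A * B) = mc A * mc B :=
  Matrix.map_mul (f := Complex.ofRealHom)

lemma mc_add {α β : Type*} (A B : Matrix α β ℝ) : mc (A + B) = mc A + mc B := by
  ext a b; simp [mc]

lemma mc_sub {α β : Type*} (A B : Matrix α β ℝ) : mc (A - B) = mc A - mc B := by
  ext a b; simp [mc]

lemma mc_one {α : Type*} [Fintype α] [DecidableEq α] :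
    mc (1 : Matrix α α ℝ) = 1 := by
  ext a b; by_cases h : a = b <;> simp [mc, Matrix.one_apply, h]

/-! ### padGe lemmas -/

lemma mul_padGe (d : Fin (N+1) → ℕ) (i : Fin (N+1))
    {β : Type*} [Fintype β] (X : Matrix β (Idx d) ℝ) :
    X * padGe d i = X.submatrix id Subtype.val := by
  ext r c
  rw [Matrix.mul_apply]
  simp only [padGe, Matrix.of_apply, mul_ite, mul_one, mul_zero]
  rw [Finset.sum_ite_eq' Finset.univ ((c : Idx d)) (fun x => X r x)]
  simp [Matrix.submatrix_apply]

lemma tr_padGe_mul {β : Type*} (d : Fin (N+1) → ℕ) (i : Fin (N+1))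
    (X : Matrix (Idx d) β ℝ) :
    (padGe d i)ᵀ * X = X.submatrix Subtype.val id := by
  ext c z
  rw [Matrix.mul_apply]
  simp only [padGe, Matrix.transpose_apply, Matrix.of_apply, ite_mul, one_mul, zero_mul]
  rw [Finset.sum_ite_eq' Finset.univ ((c : Idx d)) (fun x => X x z)]
  simp [Matrix.submatrix_apply]

lemma padGe_mul_apply {β : Type*} (d : Fin (N+1) → ℕ) (i : Fin (N+1))
    (Y : Matrix (IdxGe d i) β ℝ) (r : Idx d) (b : β) :
    (padGe d i * Y) r b = if h : i ≤ r.1 then Y ⟨r, h⟩ b else 0 := by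
  rw [Matrix.mul_apply]
  by_cases h : i ≤ r.1
  · rw [dif_pos h, Finset.sum_eq_single (⟨r, h⟩ : IdxGe d i)]
    · simp [padGe]
    · intro c _ hc
      have : r ≠ (c : Idx d) := by
        intro e; exact hc (by apply Subtype.ext; exact e.symm)
      simp [padGe, this]
    · intro hmem; exact absurd (Finset.mem_univ _) hmem
  · rw [dif_neg h]
    apply Finset.sum_eq_zero
    intro c _
    have : r ≠ (c : Idx d) := by
      intro e; exact h (by rw [e]; exact c.2)
    simp [padGe, this]

lemma padGe_mul_eq_zero {β : Type*} (d : Fin (N+1) → ℕ) (i : Fin (N+1))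
    (Y : Matrix (IdxGe d i) β ℝ) (r : Idx d) (b : β) (h : ¬ i ≤ r.1) :
    (padGe d i * Y) r b = 0 := by
  rw [padGe_mul_apply, dif_neg h]

lemma tr_padGe_padGe (d : Fin (N+1) → ℕ) (i : Fin (N+1)) :
    (padGe d i)ᵀ * padGe d i = (1 : Matrix (IdxGe d i) (IdxGe d i) ℝ) := by
  rw [tr_padGe_mul]
  ext c c'
  simp only [Matrix.submatrix_apply, padGe, Matrix.of_apply, Matrix.one_apply, id]
  by_cases h : c = c'
  · simp [h]
  · have : (c : Idx d) ≠ (c' : Idx d) := fun e => h (Subtype.ext e)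
    simp [h, this]

lemma padGe_absorb (d : Fin (N+1) → ℕ) {i i' : Fin (N+1)} (h : i ≤ i') :
    padGe d i * ((padGe d i)ᵀ * padGe d i') = padGe d i' := by
  rw [tr_padGe_mul]
  ext r c
  rw [padGe_mul_apply]
  by_cases hr : i ≤ r.1
  · rw [dif_pos hr]; simp [Matrix.submatrix_apply]
  · rw [dif_neg hr]
    have : r ≠ (c : Idx d) := by
      intro e
      exact hr (le_trans h (by rw [e]; exact c.2))
    simp [padGe, this]

lemma B_mul_padGe (P : Plant N) (i : Fin (N+1)) : P.B * padGe P.md i = Bdown P i := by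
  rw [mul_padGe]; rfl

lemma H_mul_padGe (P : Plant N) (i : Fin (N+1)) : P.H * padGe P.md i = Hdown P i := by
  rw [mul_padGe]; rfl

end Aux

section Aux2

open Matrix

variable {N : ℕ}

/-- the row-difference selector `θ_j = [0,…,0,−I at ctrl block j−1,0,…,0, +I at plant]`
(for `j = 0` just `[0,…,0, I]`). -/
def Th (nd : Fin (N+1) → ℕ) (j : Fin (N+1)) : Matrix (Idx nd) (BigIx nd) ℝ :=
  Matrix.of fun a x =>
    Sum.elim (fun y : CtrIx nd => if 0 < j.1 ∧ y.1.1 = j.1 - 1 ∧ a = y.2 then (-1:ℝ) else 0)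
      (fun b => if a = b then (1:ℝ) else 0) x

lemma Th_mul_apply {nd : Fin (N+1) → ℕ} (j : Fin (N+1)) {β : Type*}
    (M : Matrix (BigIx nd) β ℝ) (a : Idx nd) (z : β) :
    (Th nd j * M) a z = M (Sum.inr a) z -
      (if h : 0 < j.1 then
        M (Sum.inl (⟨⟨j.1 - 1, lt_of_le_of_lt (Nat.sub_le _ _) j.isLt⟩, a⟩ : CtrIx nd)) z
       else 0) := by
  rw [Matrix.mul_apply, Fintype.sum_sum_type]
  have h2 : ∑ b : Idx nd, Th nd j a (Sum.inr b) * M (Sum.inr b) z = M (Sum.inr a) z := by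
    simp only [Th, Matrix.of_apply, Sum.elim_inr, ite_mul, one_mul, zero_mul]
    rw [Finset.sum_ite_eq Finset.univ a (fun b => M (Sum.inr b) z)]
    simp
  have h1 : ∑ y : CtrIx nd, Th nd j a (Sum.inl y) * M (Sum.inl y) z
      = -(if h : 0 < j.1 then
          M (Sum.inl (⟨⟨j.1 - 1, lt_of_le_of_lt (Nat.sub_le _ _) j.isLt⟩, a⟩ : CtrIx nd)) z
         else 0) := by
    by_cases h0 : 0 < j.1
    · rw [dif_pos h0,
        Finset.sum_eq_single
          ((⟨⟨j.1 - 1, lt_of_le_of_lt (Nat.sub_le _ _) j.isLt⟩, a⟩ : CtrIx nd))]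
      · simp [Th, h0]
      · intro y _ hy
        have hc : ¬(0 < j.1 ∧ y.1.1 = j.1 - 1 ∧ a = y.2) := by
          rintro ⟨-, hA, hB⟩
          exact hy (by
            have : y.1 = (⟨j.1 - 1, lt_of_le_of_lt (Nat.sub_le _ _) j.isLt⟩ : Fin (N+1)) :=
              Fin.ext hA
            exact Prod.ext this hB.symm)
        simp only [Th, Matrix.of_apply, Sum.elim_inl, hc, if_false, zero_mul]
      · intro hmem; exact absurd (Finset.mem_univ _) hmem
    · rw [dif_neg h0, neg_zero]
      apply Finset.sum_eq_zero
      intro y _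
      simp [Th, h0]
  rw [h1, h2]; ring

lemma mul_Th_apply {nd : Fin (N+1) → ℕ} (j : Fin (N+1)) {β : Type*}
    (X : Matrix β (Idx nd) ℝ) (r : β) (z : BigIx nd) :
    (X * Th nd j) r z =
      Sum.elim (fun y : CtrIx nd => if 0 < j.1 ∧ y.1.1 = j.1 - 1 then -(X r y.2) else 0)
        (fun b => X r b) z := by
  cases z with
  | inl y =>
    rw [Matrix.mul_apply]
    by_cases hc : 0 < j.1 ∧ y.1.1 = j.1 - 1
    · simp only [Sum.elim_inl, hc, if_true, Th, Matrix.of_apply, true_and, hc.1, hc.2,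
        mul_ite, mul_neg, mul_one, mul_zero]
      rw [Finset.sum_ite_eq' Finset.univ y.2 (fun a => -(X r a))]
      simp
    · have : ∀ a : Idx nd, ¬(0 < j.1 ∧ y.1.1 = j.1 - 1 ∧ a = y.2) := by
        intro a h; exact hc ⟨h.1, h.2.1⟩
      simp only [Th, Matrix.of_apply, Sum.elim_inl, this, hc, if_false, mul_zero,
        Finset.sum_const_zero]
  | inr b =>
    rw [Matrix.mul_apply]
    simp only [Th, Matrix.of_apply, Sum.elim_inr, mul_ite, mul_one, mul_zero]
    rw [Finset.sum_ite_eq' Finset.univ b (fun a => X r a)]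
    simp

/-- explicit inverse of the incidence matrix `ζ` -/
def Xi (nd : Fin (N+1) → ℕ) : Matrix (CtrIx nd) (CtrIx nd) ℝ :=
  Matrix.of fun x y =>
    (if x = y then (1:ℝ) else 0) - (if x.1.1 = y.1.1 + 1 ∧ x.2 = y.2 then (1:ℝ) else 0)

lemma mul_Xi_apply {nd : Fin (N+1) → ℕ} {α : Type*} (M : Matrix α (CtrIx nd) ℝ)
    (r : α) (y : CtrIx nd) :
    (M * Xi nd) r y = M r y -
      (if h : y.1.1 + 1 < N + 1 then M r (⟨⟨y.1.1 + 1, h⟩, y.2⟩ : CtrIx nd) else 0) := by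
  rw [Matrix.mul_apply]
  simp only [Xi, Matrix.of_apply, mul_sub, mul_ite, mul_one, mul_zero]
  rw [Finset.sum_sub_distrib]
  congr 1
  · rw [Finset.sum_ite_eq' Finset.univ y (fun x => M r x)]; simp
  · by_cases hz : y.1.1 + 1 < N + 1
    · rw [dif_pos hz, Finset.sum_eq_single ((⟨⟨y.1.1 + 1, hz⟩, y.2⟩ : CtrIx nd))]
      · simp
      · intro w _ hw
        have hc : ¬(w.1.1 = y.1.1 + 1 ∧ w.2 = y.2) := by
          rintro ⟨hA, hB⟩
          exact hw (Prod.ext (Fin.ext hA) hB)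
        simp [hc]
      · intro hmem; exact absurd (Finset.mem_univ _) hmem
    · rw [dif_neg hz]
      apply Finset.sum_eq_zero
      intro w _
      have hc : ¬(w.1.1 = y.1.1 + 1 ∧ w.2 = y.2) := by
        rintro ⟨hA, -⟩; omega
      simp [hc]

lemma zetaN_mul_Xi (nd : Fin (N+1) → ℕ) : zetaN nd * Xi nd = 1 := by
  ext x z
  rw [mul_Xi_apply]
  simp only [zetaN, Matrix.of_apply, Matrix.one_apply]
  by_cases h2 : x.2 = z.2
  · by_cases hle : z.1.1 ≤ x.1.1
    · by_cases heq : x.1.1 = z.1.1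
      · have hx : x = z := Prod.ext (Fin.ext heq) h2
        have hko : ∀ h : z.1.1 + 1 < N + 1, ¬((⟨z.1.1 + 1, h⟩ : Fin (N+1)) ≤ x.1 ∧ x.2 = z.2) := by
          intro h hc
          have : z.1.1 + 1 ≤ x.1.1 := Fin.le_def.mp hc.1
          omega
        rw [if_pos ⟨Fin.le_def.mpr hle, h2⟩, if_pos hx]
        rcases Nat.lt_or_ge (z.1.1 + 1) (N + 1) with h | h
        · rw [dif_pos h, if_neg (hko h)]; norm_num
        · rw [dif_neg (by omega)]; norm_num
      · have hx : x ≠ z := fun e => heq (by rw [e])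
        have hlt : z.1.1 + 1 ≤ x.1.1 := by omega
        have hN : z.1.1 + 1 < N + 1 := by have := x.1.isLt; omega
        rw [if_pos ⟨Fin.le_def.mpr hle, h2⟩, dif_pos hN,
          if_pos ⟨Fin.le_def.mpr hlt, h2⟩, if_neg hx]
        norm_num
    · have hx : x ≠ z := fun e => hle (le_of_eq (by rw [e]))
      have c1 : ¬(z.1 ≤ x.1 ∧ x.2 = z.2) := fun c => hle (Fin.le_def.mp c.1)
      have hko : ∀ h : z.1.1 + 1 < N + 1, ¬((⟨z.1.1 + 1, h⟩ : Fin (N+1)) ≤ x.1 ∧ x.2 = z.2) := by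
        intro h hc
        have : z.1.1 + 1 ≤ x.1.1 := Fin.le_def.mp hc.1
        omega
      rw [if_neg c1, if_neg hx]
      rcases Nat.lt_or_ge (z.1.1 + 1) (N + 1) with h | h
      · rw [dif_pos h, if_neg (hko h)]; norm_num
      · rw [dif_neg (by omega)]; norm_num
  · have hx : x ≠ z := fun e => h2 (by rw [e])
    have c1 : ¬(z.1 ≤ x.1 ∧ x.2 = z.2) := fun c => h2 c.2
    have hko : ∀ h : z.1.1 + 1 < N + 1, ¬((⟨z.1.1 + 1, h⟩ : Fin (N+1)) ≤ x.1 ∧ x.2 = z.2) := by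
      intro h hc; exact h2 hc.2
    rw [if_neg c1, if_neg hx]
    rcases Nat.lt_or_ge (z.1.1 + 1) (N + 1) with h | h
    · rw [dif_pos h, if_neg (hko h)]; norm_num
    · rw [dif_neg (by omega)]; norm_num

lemma zetaN_inv (nd : Fin (N+1) → ℕ) : (zetaN nd)⁻¹ = Xi nd :=
  Matrix.inv_eq_right_inv (zetaN_mul_Xi nd)

lemma zetaN_mul_blkDiag_apply {nd : Fin (N+1) → ℕ}
    (f : Fin (N+1) → Matrix (Idx nd) (Idx nd) ℝ) (x v : CtrIx nd) :
    (zetaN nd * blkDiagN f) x v = if v.1 ≤ x.1 then f v.1 x.2 v.2 else 0 := by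
  rw [Matrix.mul_apply, Finset.sum_eq_single ((⟨v.1, x.2⟩ : CtrIx nd))]
  · simp [zetaN, blkDiagN]
  · intro w _ hw
    by_cases hw1 : w.1 = v.1
    · have hw2 : x.2 ≠ w.2 := by
        intro e; exact hw (Prod.ext hw1 e.symm)
      simp [zetaN, blkDiagN, hw2]
    · simp [blkDiagN, hw1]
  · intro hmem; exact absurd (Finset.mem_univ _) hmem

end Aux2

section Aux3

open Matrix

variable {N : ℕ} (P : Plant N) (K : KGains P) (L : LGains P)

lemma Bcal_mul_inl {β : Type*} (X : Matrix (Idx P.md) β ℝ) (y : CtrIx P.nd) (z : β) :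
    (Bcal P * X) (Sum.inl y) z = 0 := by
  rw [Matrix.mul_apply]
  apply Finset.sum_eq_zero
  intro c _
  simp [Bcal]

lemma Bcal_mul_inr {β : Type*} (X : Matrix (Idx P.md) β ℝ) (a : Idx P.nd) (z : β) :
    (Bcal P * X) (Sum.inr a) z = (P.B * X) a z := by
  rw [Matrix.mul_apply, Matrix.mul_apply]
  congr 1

lemma CK_apply (rr : Idx P.md) (y : CtrIx P.nd) :
    CK P K rr y = (padGe P.md y.1 * K y.1) rr y.2 -
      (if h : y.1.1 + 1 < N + 1 then
        (padGe P.md ⟨y.1.1 + 1, h⟩ * K ⟨y.1.1 + 1, h⟩) rr y.2 else 0) := by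
  unfold CK
  rw [zetaN_inv, mul_Xi_apply]
  rfl

lemma B_CK_apply (a : Idx P.nd) (y : CtrIx P.nd) :
    (P.B * CK P K) a y = (Bdown P y.1 * K y.1) a y.2 -
      (if h : y.1.1 + 1 < N + 1 then
        (Bdown P ⟨y.1.1 + 1, h⟩ * K ⟨y.1.1 + 1, h⟩) a y.2 else 0) := by
  rw [Matrix.mul_apply]
  have : ∀ rr, P.B a rr * CK P K rr y
      = P.B a rr * (padGe P.md y.1 * K y.1) rr y.2 -
        (if h : y.1.1 + 1 < N + 1 then
          P.B a rr * (padGe P.md ⟨y.1.1 + 1, h⟩ * K ⟨y.1.1 + 1, h⟩) rr y.2 else 0) := by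
    intro rr
    rw [CK_apply, mul_sub]
    congr 1
    by_cases h : y.1.1 + 1 < N + 1
    · rw [dif_pos h, dif_pos h]
    · rw [dif_neg h, dif_neg h, mul_zero]
  rw [Finset.sum_congr rfl (fun rr _ => this rr), Finset.sum_sub_distrib]
  congr 1
  · rw [← Matrix.mul_apply, ← Matrix.mul_assoc, B_mul_padGe]
  · by_cases h : y.1.1 + 1 < N + 1
    · simp only [dif_pos h]
      rw [← Matrix.mul_apply, ← Matrix.mul_assoc, B_mul_padGe]
    · simp only [dif_neg h, Finset.sum_const_zero]

/-- the inner matrix of `Kcal` -/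
def Wmat (i : Fin (N+1)) : Matrix (Idx P.md) (BigIx P.nd) ℝ :=
  Matrix.of fun (rr : Idx P.md) (x : BigIx P.nd) =>
    Sum.elim
      (fun y : CtrIx P.nd =>
        if hl : y.1.1 < N then
          (if y.1 < i then (0:ℝ)
           else
             have h1 : y.1.1 + 1 < N + 1 := by omega
             (padGe P.md ⟨y.1.1 + 1, h1⟩ * K ⟨y.1.1 + 1, h1⟩ -
                 padGe P.md y.1 * K y.1) rr y.2)
        else (-(padGe P.md (Fin.last N) * K (Fin.last N))) rr y.2)
      (fun a => (padGe P.md i * K i) rr a) x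

lemma Kcal_eq (i : Fin (N+1)) : Kcal P K i = (padGe P.md i)ᵀ * Wmat P K i := rfl

lemma PK_apply (i : Fin (N+1)) (rr : Idx P.md) (z : BigIx P.nd) :
    (padGe P.md i * Kcal P K i) rr z = if i ≤ rr.1 then Wmat P K i rr z else 0 := by
  rw [Kcal_eq, padGe_mul_apply, tr_padGe_mul]
  by_cases h : i ≤ rr.1
  · rw [dif_pos h, if_pos h]
    rfl
  · rw [dif_neg h, if_neg h]

lemma PK_inr (i : Fin (N+1)) (rr : Idx P.md) (b : Idx P.nd) :
    (padGe P.md i * Kcal P K i) rr (Sum.inr b) = (padGe P.md i * K i) rr b := by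
  rw [PK_apply]
  by_cases h : i ≤ rr.1
  · rw [if_pos h]; rfl
  · rw [if_neg h, padGe_mul_apply, dif_neg h]

lemma ckW (i : Fin (N+1)) (rr : Idx P.md) (y : CtrIx P.nd) :
    CK P K rr y + (padGe P.md i * Kcal P K i) rr (Sum.inl y)
      = if y.1 < i then CK P K rr y else 0 := by
  rw [PK_apply]
  by_cases hyi : y.1 < i
  · rw [if_pos hyi]
    have hl : y.1.1 < N := by
      have h1 : y.1.1 < i.1 := Fin.lt_def.mp hyi
      have h2 : i.1 < N + 1 := i.isLt
      omega
    have hz : Wmat P K i rr (Sum.inl y) = 0 := by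
      simp [Wmat, hl, hyi]
    rw [hz, ite_self, add_zero]
  · rw [if_neg hyi, CK_apply]
    have hiy : i ≤ y.1 := not_lt.mp hyi
    by_cases hl : y.1.1 < N
    · have h1 : y.1.1 + 1 < N + 1 := by omega
      have hW : Wmat P K i rr (Sum.inl y)
          = (padGe P.md ⟨y.1.1 + 1, h1⟩ * K ⟨y.1.1 + 1, h1⟩) rr y.2
            - (padGe P.md y.1 * K y.1) rr y.2 := by
        simp [Wmat, hl, hyi, Matrix.sub_apply]
      rw [dif_pos h1, hW]
      by_cases hr : i ≤ rr.1
      · rw [if_pos hr]; ring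
      · rw [if_neg hr]
        have s1 : (padGe P.md y.1 * K y.1) rr y.2 = 0 :=
          padGe_mul_eq_zero _ _ _ _ _ (fun hc => hr (le_trans hiy hc))
        have s2 : (padGe P.md ⟨y.1.1 + 1, h1⟩ * K ⟨y.1.1 + 1, h1⟩) rr y.2 = 0 := by
          apply padGe_mul_eq_zero
          intro hc
          apply hr
          refine le_trans hiy (le_trans ?_ hc)
          exact Fin.le_def.mpr (Nat.le_succ _)
        rw [s1, s2]; ring
    · have hlast : y.1 = Fin.last N := Fin.ext (by have := y.1.isLt; simp [Fin.last]; omega)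
      have hW : Wmat P K i rr (Sum.inl y)
          = -((padGe P.md (Fin.last N) * K (Fin.last N)) rr y.2) := by
        simp [Wmat, hl]
      rw [dif_neg (by omega), hW]
      by_cases hr : i ≤ rr.1
      · rw [if_pos hr, hlast]; ring
      · rw [if_neg hr]
        have s1 : (padGe P.md y.1 * K y.1) rr y.2 = 0 := by
          apply padGe_mul_eq_zero
          intro hc
          exact hr (le_trans hiy hc)
        rw [s1]; ring

lemma row_inr_inl (i : Fin (N+1)) (a : Idx P.nd) (y : CtrIx P.nd) :
    (Acal P K L + Bcal P * (padGe P.md i * Kcal P K i)) (Sum.inr a) (Sum.inl y)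
      = if y.1 < i then (P.B * CK P K) a y else 0 := by
  rw [Matrix.add_apply, Bcal_mul_inr]
  have hA : Acal P K L (Sum.inr a) (Sum.inl y) = (P.B * CK P K) a y := rfl
  rw [hA, Matrix.mul_apply, Matrix.mul_apply, ← Finset.sum_add_distrib]
  have : ∀ rr, P.B a rr * CK P K rr y + P.B a rr * (padGe P.md i * Kcal P K i) rr (Sum.inl y)
      = P.B a rr * (if y.1 < i then CK P K rr y else 0) := by
    intro rr; rw [← mul_add, ckW]
  rw [Finset.sum_congr rfl (fun rr _ => this rr)]
  by_cases hy : y.1 < i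
  · simp only [if_pos hy, Matrix.mul_apply]
  · simp only [if_neg hy, mul_zero, Finset.sum_const_zero]

lemma row_inr_inr (i : Fin (N+1)) (a b : Idx P.nd) :
    (Acal P K L + Bcal P * (padGe P.md i * Kcal P K i)) (Sum.inr a) (Sum.inr b)
      = (P.A + Bdown P i * K i) a b := by
  rw [Matrix.add_apply, Bcal_mul_inr]
  have hA : Acal P K L (Sum.inr a) (Sum.inr b) = P.A a b := rfl
  have h2 : (P.B * (padGe P.md i * Kcal P K i)) a (Sum.inr b) = (Bdown P i * K i) a b := by
    rw [Matrix.mul_apply,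
      Finset.sum_congr rfl (fun rr _ => by rw [PK_inr]),
      ← Matrix.mul_apply, ← Matrix.mul_assoc, B_mul_padGe]
  rw [hA, h2, Matrix.add_apply]

lemma row_inl (i : Fin (N+1)) (x : CtrIx P.nd) (z : BigIx P.nd) :
    (Acal P K L + Bcal P * (padGe P.md i * Kcal P K i)) (Sum.inl x) z
      = Acal P K L (Sum.inl x) z := by
  rw [Matrix.add_apply, Bcal_mul_inl, add_zero]

lemma tr_padLe_mul {β : Type*} (d : Fin (N+1) → ℕ) (i : Fin (N+1))
    (X : Matrix (Idx d) β ℝ) :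
    (padLe d i)ᵀ * X = X.submatrix Subtype.val id := by
  ext c z
  rw [Matrix.mul_apply]
  simp only [padLe, Matrix.transpose_apply, Matrix.of_apply, ite_mul, one_mul, zero_mul]
  rw [Finset.sum_ite_eq' Finset.univ ((c : Idx d)) (fun x => X x z)]
  simp [Matrix.submatrix_apply]

lemma BKC_apply (x : CtrIx P.nd) (b : Idx P.nd) :
    (BK P L * P.C) x b = -((L x.1 * Cup P x.1) x.2 b) := by
  rw [Matrix.mul_apply]
  have : ∀ c, BK P L x c * P.C c b
      = -((L x.1 * (padLe P.pd x.1)ᵀ) x.2 c * P.C c b) := by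
    intro c; simp [BK]
  rw [Finset.sum_congr rfl (fun c _ => this c), Finset.sum_neg_distrib,
    ← Matrix.mul_apply, Matrix.mul_assoc, tr_padLe_mul]
  rfl

lemma AK_apply (x y : CtrIx P.nd) :
    AK P K L x y =
      (if x.1 = y.1 then P.A x.2 y.2 + (L x.1 * Cup P x.1) x.2 y.2 else 0)
      + ((if y.1 ≤ x.1 then (Bdown P y.1 * K y.1) x.2 y.2 else 0)
         - (if h : y.1.1 + 1 < N + 1 then
              (if (⟨y.1.1 + 1, h⟩ : Fin (N+1)) ≤ x.1 then
                (Bdown P ⟨y.1.1 + 1, h⟩ * K ⟨y.1.1 + 1, h⟩) x.2 y.2 else 0)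
            else 0)) := by
  unfold AK
  rw [zetaN_inv, Matrix.add_apply, Matrix.add_apply, mul_Xi_apply]
  simp only [zetaN_mul_blkDiag_apply]
  have h1 : (blkDiagN (fun _ => P.A) : Matrix (CtrIx P.nd) (CtrIx P.nd) ℝ) x y
      + blkDiagN (fun k => L k * Cup P k) x y
      = if x.1 = y.1 then P.A x.2 y.2 + (L x.1 * Cup P x.1) x.2 y.2 else 0 := by
    by_cases hxy : x.1 = y.1
    · simp [blkDiagN, hxy]
    · simp [blkDiagN, hxy]
  rw [h1]

lemma AKL_castSucc (j : Fin (N+1)) :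
    AKL P K L j.castSucc =
      if h0 : j.1 = 0 then P.A + Bdown P 0 * K 0
      else P.A + Bdown P j * K j
        + L ⟨j.1 - 1, lt_of_le_of_lt (Nat.sub_le _ _) j.isLt⟩
          * Cup P ⟨j.1 - 1, lt_of_le_of_lt (Nat.sub_le _ _) j.isLt⟩ := by
  unfold AKL
  rw [dif_pos (show (j.castSucc).1 < N + 1 from j.isLt)]
  by_cases h0 : j.1 = 0
  · rw [if_pos (show (j.castSucc).1 = 0 from h0), dif_pos h0]
  · rw [if_neg (show ¬(j.castSucc).1 = 0 from h0), dif_neg h0]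
    simp [Fin.eta]

end Aux3

section Aux4

open Matrix

variable {N : ℕ} (P : Plant N) (K : KGains P) (L : LGains P)

lemma ThBcal (j : Fin (N+1)) : Th P.nd j * Bcal P = P.B := by
  ext a c
  rw [Th_mul_apply]
  by_cases h0 : 0 < j.1
  · rw [dif_pos h0]; exact sub_zero _
  · rw [dif_neg h0]; exact sub_zero _

lemma C2 : Fcal P K + P.H * (padGe P.md 0 * Kcal P K 0)
    = (P.F + Hdown P 0 * K 0) * Th P.nd 0 := by
  ext r z
  rw [Matrix.add_apply, mul_Th_apply]
  cases z with
  | inl y =>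
    simp only [Sum.elim_inl]
    have hF : Fcal P K r (Sum.inl y) = (P.H * CK P K) r y := rfl
    rw [hF, if_neg (show ¬(0 < ((0:Fin (N+1))).1 ∧ y.1.1 = ((0:Fin (N+1))).1 - 1) from
      fun hc => by simpa using hc.1)]
    rw [Matrix.mul_apply, Matrix.mul_apply, ← Finset.sum_add_distrib]
    apply Finset.sum_eq_zero
    intro rr _
    rw [← mul_add, ckW, if_neg (show ¬ y.1 < (0:Fin (N+1)) from by simp [Fin.lt_def])]
    exact mul_zero _
  | inr b =>
    simp only [Sum.elim_inr]
    have hF : Fcal P K r (Sum.inr b) = P.F r b := rfl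
    rw [hF, Matrix.mul_apply, Finset.sum_congr rfl (fun rr _ => by rw [PK_inr]),
      ← Matrix.mul_apply, ← Matrix.mul_assoc, H_mul_padGe, Matrix.add_apply]

lemma C5 (j : Fin (N+1)) :
    Th P.nd j * (Acal P K L + Bcal P * (padGe P.md j * Kcal P K j))
      = AKL P K L j.castSucc * Th P.nd j := by
  ext a z
  rw [Th_mul_apply, mul_Th_apply]
  cases z with
  | inr b =>
    simp only [Sum.elim_inr]
    rw [row_inr_inr]
    by_cases h0 : 0 < j.1
    · rw [dif_pos h0, row_inl]
      have hAc : Acal P K L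
          (Sum.inl (⟨⟨j.1 - 1, lt_of_le_of_lt (Nat.sub_le _ _) j.isLt⟩, a⟩ : CtrIx P.nd))
          (Sum.inr b)
          = (BK P L * P.C) (⟨⟨j.1 - 1, lt_of_le_of_lt (Nat.sub_le _ _) j.isLt⟩, a⟩) b := rfl
      rw [hAc, BKC_apply, AKL_castSucc, dif_neg (by omega)]
      simp only [Matrix.add_apply]
      ring
    · rw [dif_neg h0, sub_zero, AKL_castSucc, dif_pos (show j.1 = 0 by omega)]
      have hj : j = 0 := Fin.ext (show j.1 = (0:Fin (N+1)).1 by simp only [Fin.val_zero]; omega)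
      subst hj
      rfl
  | inl y =>
    simp only [Sum.elim_inl]
    rw [row_inr_inl]
    by_cases h0 : 0 < j.1
    · rw [dif_pos h0, row_inl]
      have hAc : Acal P K L
          (Sum.inl (⟨⟨j.1 - 1, lt_of_le_of_lt (Nat.sub_le _ _) j.isLt⟩, a⟩ : CtrIx P.nd))
          (Sum.inl y)
          = AK P K L (⟨⟨j.1 - 1, lt_of_le_of_lt (Nat.sub_le _ _) j.isLt⟩, a⟩) y := rfl
      rw [hAc, AK_apply]
      simp only []
      by_cases hy : y.1.1 = j.1 - 1
      · have hyj : y.1 < j := Fin.lt_def.mpr (by omega)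
        have hyN : y.1.1 < N := by have := j.isLt; omega
        have hN1 : y.1.1 + 1 < N + 1 := by omega
        rw [if_pos hyj, if_pos (show (0 < j.1 ∧ y.1.1 = j.1 - 1) from ⟨h0, hy⟩)]
        rw [B_CK_apply, dif_pos hN1]
        rw [if_pos (show (⟨j.1 - 1, lt_of_le_of_lt (Nat.sub_le _ _) j.isLt⟩ : Fin (N+1)) = y.1
          from Fin.ext hy.symm)]
        rw [if_pos (show y.1 ≤ (⟨j.1 - 1, lt_of_le_of_lt (Nat.sub_le _ _) j.isLt⟩ : Fin (N+1))
          from Fin.le_def.mpr (show y.1.1 ≤ j.1 - 1 by omega))]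
        rw [dif_pos hN1]
        rw [if_neg (show ¬((⟨y.1.1 + 1, hN1⟩ : Fin (N+1))
            ≤ (⟨j.1 - 1, lt_of_le_of_lt (Nat.sub_le _ _) j.isLt⟩ : Fin (N+1))) from
          fun hc => by have : y.1.1 + 1 ≤ j.1 - 1 := Fin.le_def.mp hc; omega)]
        rw [AKL_castSucc, dif_neg (by omega)]
        have hjj : (⟨y.1.1 + 1, hN1⟩ : Fin (N+1)) = j :=
          Fin.ext (show y.1.1 + 1 = j.1 by omega)
        rw [hjj]
        simp only [Matrix.add_apply]
        ring
      · rw [if_neg (show ¬(0 < j.1 ∧ y.1.1 = j.1 - 1) from fun hc => hy hc.2)]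
        by_cases hylt : y.1.1 < j.1 - 1
        · have hyj : y.1 < j := Fin.lt_def.mpr (by omega)
          have hyN : y.1.1 < N := by have := j.isLt; omega
          have hN1 : y.1.1 + 1 < N + 1 := by omega
          rw [if_pos hyj, B_CK_apply, dif_pos hN1]
          rw [if_neg (show ¬((⟨j.1 - 1, lt_of_le_of_lt (Nat.sub_le _ _) j.isLt⟩ : Fin (N+1)) = y.1)
            from fun e => hy (by have : j.1 - 1 = y.1.1 := congrArg Fin.val e; omega))]
          rw [if_pos (show y.1 ≤ (⟨j.1 - 1, lt_of_le_of_lt (Nat.sub_le _ _) j.isLt⟩ : Fin (N+1))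
            from Fin.le_def.mpr (show y.1.1 ≤ j.1 - 1 by omega))]
          rw [dif_pos hN1]
          rw [if_pos (show (⟨y.1.1 + 1, hN1⟩ : Fin (N+1))
              ≤ (⟨j.1 - 1, lt_of_le_of_lt (Nat.sub_le _ _) j.isLt⟩ : Fin (N+1)) from
            Fin.le_def.mpr (show y.1.1 + 1 ≤ j.1 - 1 by omega))]
          ring
        · have hyj : ¬ y.1 < j := by rw [Fin.lt_def]; omega
          rw [if_neg hyj]
          rw [if_neg (show ¬((⟨j.1 - 1, lt_of_le_of_lt (Nat.sub_le _ _) j.isLt⟩ : Fin (N+1)) = y.1)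
            from fun e => by have : j.1 - 1 = y.1.1 := congrArg Fin.val e; omega)]
          rw [if_neg (show ¬(y.1 ≤ (⟨j.1 - 1, lt_of_le_of_lt (Nat.sub_le _ _) j.isLt⟩ : Fin (N+1)))
            from fun hc => by have : y.1.1 ≤ j.1 - 1 := Fin.le_def.mp hc; omega)]
          have hko : ∀ h : y.1.1 + 1 < N + 1, ¬((⟨y.1.1 + 1, h⟩ : Fin (N+1))
              ≤ (⟨j.1 - 1, lt_of_le_of_lt (Nat.sub_le _ _) j.isLt⟩ : Fin (N+1))) :=
            fun h hc => by have : y.1.1 + 1 ≤ j.1 - 1 := Fin.le_def.mp hc; omega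
          rcases Nat.lt_or_ge (y.1.1 + 1) (N + 1) with h | h
          · rw [dif_pos h, if_neg (hko h)]; ring
          · rw [dif_neg (by omega)]; ring
    · rw [dif_neg h0, sub_zero]
      rw [if_neg (show ¬ y.1 < j from by rw [Fin.lt_def]; omega)]
      rw [if_neg (show ¬(0 < j.1 ∧ y.1.1 = j.1 - 1) from fun hc => h0 hc.1)]

/-- the middle constant factor of `U_{t+2}` -/
def Dmat (t : Fin N) : Matrix (IdxGe P.md t.castSucc) (Idx P.nd) ℝ :=
  (padGe P.md t.castSucc)ᵀ *
    (padGe P.md t.succ * K t.succ - padGe P.md t.castSucc * K t.castSucc)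

lemma castSucc_le_succ (t : Fin N) : (t.castSucc : Fin (N+1)) ≤ t.succ :=
  Fin.le_def.mpr (by simp only [Fin.coe_castSucc, Fin.val_succ]; omega)

lemma padGe_Dmat (t : Fin N) :
    padGe P.md t.castSucc * Dmat P K t
      = padGe P.md t.succ * K t.succ - padGe P.md t.castSucc * K t.castSucc := by
  ext rr b
  unfold Dmat
  rw [padGe_mul_apply, tr_padGe_mul]
  by_cases h : t.castSucc ≤ rr.1
  · rw [dif_pos h]; rfl
  · rw [dif_neg h, Matrix.sub_apply]
    have s1 : (padGe P.md t.succ * K t.succ) rr b = 0 :=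
      padGe_mul_eq_zero _ _ _ _ _ (fun hc => h (le_trans (castSucc_le_succ t) hc))
    have s2 : (padGe P.md t.castSucc * K t.castSucc) rr b = 0 :=
      padGe_mul_eq_zero _ _ _ _ _ h
    rw [s1, s2]; ring

lemma C6 (t : Fin N) :
    padGe P.md t.succ * Kcal P K t.succ
      = padGe P.md t.castSucc * Kcal P K t.castSucc
        + padGe P.md t.castSucc * Dmat P K t * Th P.nd t.succ := by
  rw [padGe_Dmat]
  ext rr z
  cases z with
  | inr b =>
    rw [Matrix.add_apply, PK_inr, PK_inr, mul_Th_apply]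
    simp only [Sum.elim_inr, Matrix.sub_apply]
    ring
  | inl y =>
    rw [Matrix.add_apply, PK_apply, PK_apply, mul_Th_apply]
    simp only [Sum.elim_inl]
    by_cases hy : y.1.1 = t.1
    · rw [if_pos (show (0 < (t.succ : Fin (N+1)).1 ∧ y.1.1 = (t.succ : Fin (N+1)).1 - 1) from
        ⟨Nat.succ_pos t.1, by rw [Fin.val_succ]; omega⟩)]
      have hyN : y.1.1 < N := by have := t.isLt; omega
      have hN1 : y.1.1 + 1 < N + 1 := by omega
      have hys : y.1 < t.succ := Fin.lt_def.mpr (by rw [Fin.val_succ]; omega)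
      have hW1 : Wmat P K t.succ rr (Sum.inl y) = 0 := by
        simp [Wmat, hyN, hys]
      have hsucc : (⟨y.1.1 + 1, hN1⟩ : Fin (N+1)) = t.succ :=
        Fin.ext (show y.1.1 + 1 = ((t.succ : Fin (N+1))).1 by rw [Fin.val_succ]; omega)
      have hcast : y.1 = t.castSucc := Fin.ext (by rw [Fin.coe_castSucc]; omega)
      have hnc : ¬ y.1 < t.castSucc := by rw [Fin.lt_def, Fin.coe_castSucc]; omega
      have hW2 : Wmat P K t.castSucc rr (Sum.inl y)
          = (padGe P.md t.succ * K t.succ) rr y.2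
            - (padGe P.md t.castSucc * K t.castSucc) rr y.2 := by
        simp only [Wmat, Matrix.of_apply, Sum.elim_inl, dif_pos hyN, if_neg hnc,
          Matrix.sub_apply]
        rw [hsucc, hcast]
      rw [hW1, hW2, ite_self]
      by_cases hr : t.castSucc ≤ rr.1
      · rw [if_pos hr]; simp only [Matrix.sub_apply]; ring
      · rw [if_neg hr]
        have s1 : (padGe P.md t.succ * K t.succ) rr y.2 = 0 :=
          padGe_mul_eq_zero _ _ _ _ _ (fun hc => hr (le_trans (castSucc_le_succ t) hc))
        have s2 : (padGe P.md t.castSucc * K t.castSucc) rr y.2 = 0 :=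
          padGe_mul_eq_zero _ _ _ _ _ hr
        rw [Matrix.sub_apply, s1, s2]; norm_num
    · rw [if_neg (show ¬(0 < (t.succ : Fin (N+1)).1 ∧ y.1.1 = (t.succ : Fin (N+1)).1 - 1) from
        fun hc => hy (by have := hc.2; rw [Fin.val_succ] at this; omega))]
      rw [add_zero]
      by_cases hylt : y.1.1 < t.1
      · have hyN : y.1.1 < N := by have := t.isLt; omega
        have hc1 : y.1 < t.castSucc := Fin.lt_def.mpr (by rw [Fin.coe_castSucc]; omega)
        have hc2 : y.1 < t.succ := Fin.lt_def.mpr (by rw [Fin.val_succ]; omega)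
        have hW1 : Wmat P K t.succ rr (Sum.inl y) = 0 := by simp [Wmat, hyN, hc2]
        have hW2 : Wmat P K t.castSucc rr (Sum.inl y) = 0 := by simp [Wmat, hyN, hc1]
        simp [hW1, hW2]
      · have hgt : t.1 + 1 ≤ y.1.1 := by omega
        have hnc : ¬ y.1 < t.castSucc := by rw [Fin.lt_def, Fin.coe_castSucc]; omega
        have hns : ¬ y.1 < t.succ := by rw [Fin.lt_def, Fin.val_succ]; omega
        have hVeq : Wmat P K t.succ rr (Sum.inl y) = Wmat P K t.castSucc rr (Sum.inl y) := by
          by_cases hl : y.1.1 < N <;>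
            simp [Wmat, hl, hnc, hns]
        have hV0 : ¬ t.succ ≤ rr.1 → Wmat P K t.castSucc rr (Sum.inl y) = 0 := by
          intro hr
          have hry : ¬ y.1 ≤ rr.1 := fun hc =>
            hr (le_trans (Fin.le_def.mpr (show t.1 + 1 ≤ y.1.1 from hgt)) hc)
          by_cases hl : y.1.1 < N
          · have h1 : y.1.1 + 1 < N + 1 := by omega
            have hWv : Wmat P K t.castSucc rr (Sum.inl y)
                = (padGe P.md (⟨y.1.1 + 1, h1⟩ : Fin (N+1)) * K (⟨y.1.1 + 1, h1⟩ : Fin (N+1))) rr y.2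
                  - (padGe P.md y.1 * K y.1) rr y.2 := by
              simp only [Wmat, Matrix.of_apply, Sum.elim_inl, dif_pos hl, if_neg hnc,
                Matrix.sub_apply]
            have s1 : (padGe P.md (⟨y.1.1 + 1, h1⟩ : Fin (N+1))
                * K (⟨y.1.1 + 1, h1⟩ : Fin (N+1))) rr y.2 = 0 := by
              apply padGe_mul_eq_zero
              intro hc
              exact hry (le_trans (Fin.le_def.mpr (Nat.le_succ _)) hc)
            have s2 : (padGe P.md y.1 * K y.1) rr y.2 = 0 :=
              padGe_mul_eq_zero _ _ _ _ _ hry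
            rw [hWv, s1, s2]; ring
          · have hlast : y.1 = Fin.last N := Fin.ext (by
              have := y.1.isLt
              simp only [Fin.val_last]; omega)
            simp only [Wmat, Matrix.of_apply, Sum.elim_inl, dif_neg hl, Matrix.neg_apply]
            have s1 : (padGe P.md (Fin.last N) * K (Fin.last N)) rr y.2 = 0 := by
              apply padGe_mul_eq_zero
              intro hc
              exact hry (le_trans (le_of_eq hlast) hc)
            rw [s1]; ring
        by_cases hr1 : t.succ ≤ rr.1
        · rw [if_pos hr1, if_pos (le_trans (castSucc_le_succ t) hr1), hVeq]
        · rw [if_neg hr1]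
          by_cases hr2 : t.castSucc ≤ rr.1
          · rw [if_pos hr2, hV0 hr1]
          · rw [if_neg hr2]

end Aux4

noncomputable section Aux5

open Matrix

variable {N : ℕ} (P : Plant N)

lemma injective_of_fullColRank {α β : Type*} [Fintype α] [Fintype β] [DecidableEq β]
    {M : Matrix α β ℝ} (h : FullColRank M) : Function.Injective M.mulVec := by
  have hrank : Module.finrank ℝ (LinearMap.range M.mulVecLin) = Fintype.card β := h
  have hsum := LinearMap.finrank_range_add_finrank_ker M.mulVecLin
  rw [hrank, Module.finrank_pi ℝ] at hsum
  have hker : Module.finrank ℝ (LinearMap.ker M.mulVecLin) = 0 := by omega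
  have hbot : LinearMap.ker M.mulVecLin = ⊥ := Submodule.finrank_eq_zero.mp hker
  have hinj := LinearMap.ker_eq_bot.mp hbot
  intro x y hxy
  exact hinj (show M.mulVecLin x = M.mulVecLin y by
    simpa only [Matrix.mulVecLin_apply] using hxy)

lemma padGe_mulVec_injective (d : Fin (N+1) → ℕ) (i : Fin (N+1)) :
    Function.Injective (padGe d i).mulVec := by
  intro x y hxy
  have h2 : ((padGe d i)ᵀ * padGe d i) *ᵥ x = ((padGe d i)ᵀ * padGe d i) *ᵥ y := by
    rw [← Matrix.mulVec_mulVec, ← Matrix.mulVec_mulVec, hxy]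
  rwa [tr_padGe_padGe, Matrix.one_mulVec, Matrix.one_mulVec] at h2

lemma hdown_injective (hH : FullColRank P.H) (i : Fin (N+1)) :
    Function.Injective (Hdown P i).mulVec := by
  intro x y hxy
  have h1 : P.H *ᵥ (padGe P.md i *ᵥ x) = P.H *ᵥ (padGe P.md i *ᵥ y) := by
    rw [Matrix.mulVec_mulVec, Matrix.mulVec_mulVec, H_mul_padGe]
    exact hxy
  exact padGe_mulVec_injective _ _ (injective_of_fullColRank hH h1)

lemma psidd_mulVec_injective (hH : FullColRank P.H) (i : Fin (N+1)) :
    Function.Injective (Psidd P i).mulVec := by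
  have hker : ∀ v, Psidd P i *ᵥ v = 0 → v = 0 := by
    intro v hv
    have h0 : v ⬝ᵥ (Psidd P i *ᵥ v) = 0 := by rw [hv, dotProduct_zero]
    have h1 : (Hdown P i *ᵥ v) ⬝ᵥ (Hdown P i *ᵥ v) = 0 := by
      calc (Hdown P i *ᵥ v) ⬝ᵥ (Hdown P i *ᵥ v)
          = (v ᵥ* (Hdown P i)ᵀ) ⬝ᵥ (Hdown P i *ᵥ v) := by rw [Matrix.vecMul_transpose]
        _ = v ⬝ᵥ ((Hdown P i)ᵀ *ᵥ (Hdown P i *ᵥ v)) := (Matrix.dotProduct_mulVec _ _ _).symm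
        _ = v ⬝ᵥ (Psidd P i *ᵥ v) := by rw [Matrix.mulVec_mulVec]; rfl
        _ = 0 := h0
    have h2 : Hdown P i *ᵥ v = 0 := dotProduct_self_eq_zero.mp h1
    exact hdown_injective P hH i (by rw [h2, Matrix.mulVec_zero])
  intro x y hxy
  have := hker (x - y) (by rw [Matrix.mulVec_sub, hxy, sub_self])
  exact sub_eq_zero.mp this

lemma psidd_posSemidef (i : Fin (N+1)) : (Psidd P i).PosSemidef := by
  have h : (Hdown P i)ᴴ = (Hdown P i)ᵀ := by
    ext a b
    simp [Matrix.conjTranspose_apply]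
  have h2 := Matrix.posSemidef_conjTranspose_mul_self (Hdown P i)
  rw [h] at h2
  exact h2

lemma msqrt_sq (i : Fin (N+1)) : msqrt (Psidd P i) * msqrt (Psidd P i) = Psidd P i := by
  unfold msqrt
  rw [dif_pos (psidd_posSemidef P i)]
  have h := psidd_posSemidef P i
  have hU : (star h.1.eigenvectorUnitary : Matrix (IdxGe P.md i) (IdxGe P.md i) ℝ) *
      (h.1.eigenvectorUnitary : Matrix (IdxGe P.md i) (IdxGe P.md i) ℝ) = 1 :=
    Unitary.star_mul_self_of_mem (h.1.eigenvectorUnitary).2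
  have hD : diagonal (Real.sqrt ∘ h.1.eigenvalues) * diagonal (Real.sqrt ∘ h.1.eigenvalues)
      = diagonal (RCLike.ofReal ∘ h.1.eigenvalues) := by
    rw [diagonal_mul_diagonal]; congr 1; funext k
    simp [Real.mul_self_sqrt (h.eigenvalues_nonneg k)]
  conv_rhs => rw [h.1.spectral_theorem, Unitary.conjStarAlgAut_apply]
  simp only [Matrix.mul_assoc]
  rw [← Matrix.mul_assoc (star _ : Matrix (IdxGe P.md i) (IdxGe P.md i) ℝ) _ (diagonal _ * _),
    hU, Matrix.one_mul,
    ← Matrix.mul_assoc (diagonal _) (diagonal _), hD]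

lemma msqrt_det_unit (hH : FullColRank P.H) (i : Fin (N+1)) :
    IsUnit (msqrt (Psidd P i)).det := by
  apply isUnit_of_mul_isUnit_left (y := (msqrt (Psidd P i)).det)
  rw [← Matrix.det_mul, msqrt_sq]
  exact (Matrix.isUnit_iff_isUnit_det _).mp
    (Matrix.mulVec_injective_iff_isUnit.mp (psidd_mulVec_injective P hH i))

lemma mc_det_unit {α : Type*} [Fintype α] [DecidableEq α] {M : Matrix α α ℝ}
    (h : IsUnit M.det) : IsUnit (mc M).det := by
  have hdet : (mc M).det = ((M.det : ℝ) : ℂ) := by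
    rw [show mc M = Complex.ofRealHom.mapMatrix M from
      (RingHom.mapMatrix_apply Complex.ofRealHom M).symm]
    exact (RingHom.map_det Complex.ofRealHom M).symm
  rw [hdet]
  exact isUnit_iff_ne_zero.mpr (by
    simp only [ne_eq, Complex.ofReal_eq_zero]
    exact h.ne_zero)

end Aux5

noncomputable section Aux6

open Matrix

variable {N : ℕ} (P : Plant N) (K : KGains P) (L : LGains P) (s : ℂ)

/-- the unnormalized cascade `Û_1 ⋯ Û_{i+1}` -/
def Uhat : (j : Fin (N+1)) → Matrix (Fin P.q) (IdxGe P.md j) ℂ :=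
  Fin.induction
    (mc (P.F + Hdown P 0 * K 0) * (s • 1 - mc (AKL P K L 0))⁻¹ * mc (Bdown P 0)
      + mc (Hdown P 0))
    (fun t ih => ih *
      (mc (Dmat P K t) * ((s • 1 - mc (AKL P K L t.succ.castSucc))⁻¹ * mc (Bdown P t.succ))
        + mc ((padGe P.md t.castSucc)ᵀ * padGe P.md t.succ)))

lemma Uhat_zero : Uhat P K L s 0
    = mc (P.F + Hdown P 0 * K 0) * (s • 1 - mc (AKL P K L 0))⁻¹ * mc (Bdown P 0)
      + mc (Hdown P 0) := by
  unfold Uhat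
  exact Fin.induction_zero _ _

lemma Uhat_succ (t : Fin N) : Uhat P K L s t.succ
    = Uhat P K L s t.castSucc *
      (mc (Dmat P K t) * ((s • 1 - mc (AKL P K L t.succ.castSucc))⁻¹ * mc (Bdown P t.succ))
        + mc ((padGe P.md t.castSucc)ᵀ * padGe P.md t.succ)) := by
  unfold Uhat
  exact Fin.induction_succ _ _ t

lemma Uprod_mul_msqrt (hH : FullColRank P.H) (j : Fin (N+1)) :
    Uprod P K L s j * mc (msqrt (Psidd P j)) = Uhat P K L s j := by
  induction j using Fin.induction with
  | zero =>
    have h0 : Uprod P K L s 0 = Uone P K L s := by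
      unfold Uprod
      exact Fin.induction_zero _ _
    rw [h0, Uhat_zero]
    unfold Uone
    rw [Matrix.add_mul, Matrix.mul_assoc _ _ (mc (msqrt (Psidd P 0))),
      Matrix.mul_assoc _ _ (mc (msqrt (Psidd P 0))),
      Matrix.nonsing_inv_mul _ (mc_det_unit (msqrt_det_unit P hH 0)),
      Matrix.mul_one, Matrix.mul_one, Matrix.mul_assoc]
  | succ t ih =>
    have h1 : Uprod P K L s t.succ = Uprod P K L s t.castSucc * Usucc P K L t s := by
      unfold Uprod
      exact Fin.induction_succ _ _ t
    rw [h1, Uhat_succ, ← ih, Matrix.mul_assoc, Matrix.mul_assoc]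
    congr 1
    unfold Usucc
    rw [show ((padGe P.md t.castSucc)ᵀ *
        (padGe P.md t.succ * K t.succ - padGe P.md t.castSucc * K t.castSucc))
      = Dmat P K t from rfl]
    rw [Matrix.add_mul,
      Matrix.mul_assoc _ _ (mc (msqrt (Psidd P t.succ))),
      Matrix.mul_assoc _ _ (mc (msqrt (Psidd P t.succ))),
      Matrix.nonsing_inv_mul _ (mc_det_unit (msqrt_det_unit P hH t.succ)),
      Matrix.mul_one, Matrix.mul_one, Matrix.mul_add]
    congr 1
    simp only [Matrix.mul_assoc]

lemma star8 (j : Fin (N+1)) (hA : IsUnit (s • 1 - mc (Acal P K L)))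
    (hj : IsUnit (s • 1 - mc (AKL P K L j.castSucc))) :
    mc (Th P.nd j) * ((s • 1 - mc (Acal P K L))⁻¹ * (mc (Bcal P) * mc (padGe P.md j)))
      = (s • 1 - mc (AKL P K L j.castSucc))⁻¹ *
          (mc (Bdown P j) *
            (1 - mc (Kcal P K j) *
              ((s • 1 - mc (Acal P K L))⁻¹ * (mc (Bcal P) * mc (padGe P.md j))))) := by
  have hAd := (Matrix.isUnit_iff_isUnit_det _).mp hA
  have hjd := (Matrix.isUnit_iff_isUnit_det _).mp hj
  have hTB : mc (Th P.nd j) * mc (Bcal P) = mc P.B := by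
    rw [← mc_mul, ThBcal]
  have hBE : mc P.B * mc (padGe P.md j) = mc (Bdown P j) := by
    rw [← mc_mul, B_mul_padGe]
  have h5 : mc (Th P.nd j) * mc (Acal P K L) + mc (Bdown P j) * mc (Kcal P K j)
      = mc (AKL P K L j.castSucc) * mc (Th P.nd j) := by
    have h := congrArg mc (C5 P K L j)
    simp only [mc_mul, mc_add] at h
    rw [Matrix.mul_add, ← Matrix.mul_assoc (mc (Th P.nd j)) (mc (Bcal P)),
      ← Matrix.mul_assoc _ (mc (padGe P.md j)), hTB, hBE] at h
    exact h
  have h2 : mc (Th P.nd j) * (s • 1 - mc (Acal P K L))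
      = (s • 1 - mc (AKL P K L j.castSucc)) * mc (Th P.nd j)
        + mc (Bdown P j) * mc (Kcal P K j) := by
    rw [Matrix.mul_sub, Matrix.sub_mul, Matrix.mul_smul, Matrix.mul_one,
      Matrix.smul_mul, Matrix.one_mul]
    rw [eq_sub_of_add_eq h5]
    abel
  have h3 : mc (Th P.nd j)
      = (s • 1 - mc (AKL P K L j.castSucc)) * (mc (Th P.nd j) * (s • 1 - mc (Acal P K L))⁻¹)
        + mc (Bdown P j) * (mc (Kcal P K j) * (s • 1 - mc (Acal P K L))⁻¹) := by
    calc mc (Th P.nd j)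
        = mc (Th P.nd j) * ((s • 1 - mc (Acal P K L)) * (s • 1 - mc (Acal P K L))⁻¹) := by
          rw [Matrix.mul_nonsing_inv _ hAd, Matrix.mul_one]
      _ = (mc (Th P.nd j) * (s • 1 - mc (Acal P K L))) * (s • 1 - mc (Acal P K L))⁻¹ := by
          rw [Matrix.mul_assoc]
      _ = ((s • 1 - mc (AKL P K L j.castSucc)) * mc (Th P.nd j)
            + mc (Bdown P j) * mc (Kcal P K j)) * (s • 1 - mc (Acal P K L))⁻¹ := by rw [h2]
      _ = _ := by rw [Matrix.add_mul, Matrix.mul_assoc, Matrix.mul_assoc]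
  have h4 : mc (Th P.nd j) * (s • 1 - mc (Acal P K L))⁻¹
      = (s • 1 - mc (AKL P K L j.castSucc))⁻¹ * mc (Th P.nd j)
        - (s • 1 - mc (AKL P K L j.castSucc))⁻¹ *
            (mc (Bdown P j) * (mc (Kcal P K j) * (s • 1 - mc (Acal P K L))⁻¹)) := by
    have h := congrArg (fun Z => (s • 1 - mc (AKL P K L j.castSucc))⁻¹ * Z) h3
    rw [Matrix.mul_add, ← Matrix.mul_assoc ((s • 1 - mc (AKL P K L j.castSucc))⁻¹)
        (s • 1 - mc (AKL P K L j.castSucc)),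
      Matrix.nonsing_inv_mul _ hjd, Matrix.one_mul] at h
    exact eq_sub_of_add_eq h.symm
  calc mc (Th P.nd j) * ((s • 1 - mc (Acal P K L))⁻¹ * (mc (Bcal P) * mc (padGe P.md j)))
      = (mc (Th P.nd j) * (s • 1 - mc (Acal P K L))⁻¹) * (mc (Bcal P) * mc (padGe P.md j)) := by
        rw [Matrix.mul_assoc]
    _ = ((s • 1 - mc (AKL P K L j.castSucc))⁻¹ * mc (Th P.nd j)
          - (s • 1 - mc (AKL P K L j.castSucc))⁻¹ *
              (mc (Bdown P j) * (mc (Kcal P K j) * (s • 1 - mc (Acal P K L))⁻¹)))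
        * (mc (Bcal P) * mc (padGe P.md j)) := by rw [h4]
    _ = (s • 1 - mc (AKL P K L j.castSucc))⁻¹ *
          (mc (Th P.nd j) * (mc (Bcal P) * mc (padGe P.md j)))
        - (s • 1 - mc (AKL P K L j.castSucc))⁻¹ *
          (mc (Bdown P j) * (mc (Kcal P K j) *
            ((s • 1 - mc (Acal P K L))⁻¹ * (mc (Bcal P) * mc (padGe P.md j))))) := by
        rw [Matrix.sub_mul, Matrix.mul_assoc, Matrix.mul_assoc, Matrix.mul_assoc,
          Matrix.mul_assoc]
    _ = (s • 1 - mc (AKL P K L j.castSucc))⁻¹ *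
          (mc (Bdown P j)
        - mc (Bdown P j) * (mc (Kcal P K j) *
            ((s • 1 - mc (Acal P K L))⁻¹ * (mc (Bcal P) * mc (padGe P.md j))))) := by
        rw [show mc (Th P.nd j) * (mc (Bcal P) * mc (padGe P.md j)) = mc (Bdown P j) from by
          rw [← Matrix.mul_assoc, hTB, hBE], ← Matrix.mul_sub]
    _ = _ := by
        congr 1
        rw [Matrix.mul_sub, Matrix.mul_one]

end Aux6

set_option maxHeartbeats 4000000 in
/-- factorization of the closed-loop transfer function from control input to
performance output: `G12(s) E^{↓i} = U_1(s) ⋯ U_i(s) M_i⁻¹(s)` with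
`M_i⁻¹(s) = (Ψ_{↓i}^{↓i})^{1/2} − (Ψ_{↓i}^{↓i})^{1/2} 𝒦_i (sI−𝒜)⁻¹ ℬ E^{↓i}`. -/
theorem stmt8 {N : ℕ} (P : Plant N)
    (hdim : ∀ k : Fin (N+1), 0 < P.nd k ∧ 0 < P.md k ∧ 0 < P.pd k)
    (hA : IsLBT P.A) (hB : IsLBT P.B) (hC : IsLBT P.C)
    (hH : FullColRank P.H)
    (X Y : SFam P) (K : KGains P) (L : LGains P)
    (hcoup : Coupled P X K Y L)
    (i : Fin (N+1)) (s : ℂ)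
    (hs : s ∉ spectrum ℂ (mc (Acal P K L)))
    (hsk : ∀ k : Fin (N+2), k.1 ≤ i.1 → s ∉ spectrum ℂ (mc (AKL P K L k))) :
    G12 P K L s * mc (padGe P.md i) =
      Uprod P K L s i *
        (mc (msqrt (Psidd P i)) -
          mc (msqrt (Psidd P i)) * mc (Kcal P K i) * (s • 1 - mc (Acal P K L))⁻¹ *
            mc (Bcal P * padGe P.md i)) := by


  classical
  have hAunit : IsUnit (s • 1 - mc (Acal P K L)) := by
    have h := spectrum.notMem_iff.mp hs
    rwa [Algebra.algebraMap_eq_smul_one] at h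
  have hkunit : ∀ j : Fin (N+1), j.1 ≤ i.1 → IsUnit (s • 1 - mc (AKL P K L j.castSucc)) := by
    intro j hj
    have h := spectrum.notMem_iff.mp (hsk j.castSucc (by simpa using hj))
    rwa [Algebra.algebraMap_eq_smul_one] at h
  have main : ∀ j : Fin (N+1), j.1 ≤ i.1 →
      G12 P K L s * mc (padGe P.md j)
        = Uhat P K L s j *
            (1 - mc (Kcal P K j) *
              ((s • 1 - mc (Acal P K L))⁻¹ * (mc (Bcal P) * mc (padGe P.md j)))) := by
    intro j
    induction j using Fin.induction with
    | zero =>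
      intro _
      have hst := star8 P K L s 0 hAunit (hkunit 0 (by simp))
      rw [Fin.castSucc_zero] at hst
      have hst2 : mc (Th P.nd 0) *
            ((s • 1 - mc (Acal P K L))⁻¹ * (mc (Bcal P) * mc (padGe P.md 0)))
          = (s • 1 - mc (AKL P K L 0))⁻¹ * mc (Bdown P 0)
            - (s • 1 - mc (AKL P K L 0))⁻¹ * (mc (Bdown P 0) * (mc (Kcal P K 0) *
                ((s • 1 - mc (Acal P K L))⁻¹ * (mc (Bcal P) * mc (padGe P.md 0))))) := by
        rw [hst, Matrix.mul_sub, Matrix.mul_one, Matrix.mul_sub]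
      have hF : mc (Fcal P K) = mc (P.F + Hdown P 0 * K 0) * mc (Th P.nd 0)
          - mc P.H * (mc (padGe P.md 0) * mc (Kcal P K 0)) := by
        have h := congrArg mc (C2 P K)
        rw [mc_add (Fcal P K), mc_mul P.H, mc_mul (padGe P.md 0),
          mc_mul (P.F + Hdown P 0 * K 0)] at h
        exact eq_sub_of_add_eq h
      have hHE : mc P.H * mc (padGe P.md 0) = mc (Hdown P 0) := by
        rw [← mc_mul, H_mul_padGe]
      have hG12 : G12 P K L s
          = mc (Fcal P K) * (s • 1 - mc (Acal P K L))⁻¹ * mc (Bcal P) + mc P.H := rfl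
      rw [hG12, hF, Uhat_zero]
      simp only [Matrix.add_mul, Matrix.sub_mul, Matrix.mul_sub, Matrix.mul_one,
        Matrix.mul_assoc]
      rw [hst2]
      simp only [Matrix.mul_sub]
      rw [← Matrix.mul_assoc (mc P.H) (mc (padGe P.md 0)), hHE]
      abel
    | succ t ih =>
      intro hsu
      have hsu' : t.1 + 1 ≤ i.1 := hsu
      have IH := ih (show t.1 ≤ i.1 by omega)
      have hst := star8 P K L s t.succ hAunit (hkunit t.succ hsu)
      have hE : mc (padGe P.md t.castSucc) * mc ((padGe P.md t.castSucc)ᵀ * padGe P.md t.succ) = mc (padGe P.md t.succ) := by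
        rw [← mc_mul, padGe_absorb _ (castSucc_le_succ t)]
      have hC6 : mc (padGe P.md t.succ) * mc (Kcal P K t.succ) = mc (padGe P.md t.castSucc) * mc (Kcal P K t.castSucc) + mc (padGe P.md t.castSucc) * (mc (Dmat P K t) * mc (Th P.nd t.succ)) := by
        have h := congrArg mc (C6 P K t)
        simp only [mc_add, mc_mul] at h
        rw [Matrix.mul_assoc (mc (padGe P.md t.castSucc)) (mc (Dmat P K t))] at h
        exact h
      have hDT : mc (padGe P.md t.castSucc) * (mc (Dmat P K t) * mc (Th P.nd t.succ)) = mc (padGe P.md t.succ) * mc (Kcal P K t.succ) - mc (padGe P.md t.castSucc) * mc (Kcal P K t.castSucc) := by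
        rw [hC6]; abel
      have hcancel : ∀ (U V : Matrix (IdxGe P.md t.castSucc) (IdxGe P.md t.succ) ℂ),
          mc (padGe P.md t.castSucc) * U = mc (padGe P.md t.castSucc) * V → U = V := by
        intro U V hUV
        have h1 : mc ((padGe P.md t.castSucc)ᵀ) * (mc (padGe P.md t.castSucc) * U)
            = mc ((padGe P.md t.castSucc)ᵀ) * (mc (padGe P.md t.castSucc) * V) := by rw [hUV]
        rwa [← Matrix.mul_assoc, ← Matrix.mul_assoc, ← mc_mul, tr_padGe_padGe, mc_one,
          Matrix.one_mul, Matrix.one_mul] at h1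
      have hlast : mc (padGe P.md t.castSucc) * ((1 - mc (Kcal P K t.castSucc) * ((s • 1 - mc (Acal P K L))⁻¹ * (mc (Bcal P) * mc (padGe P.md t.castSucc)))) * mc ((padGe P.md t.castSucc)ᵀ * padGe P.md t.succ))
          = mc (padGe P.md t.castSucc) * mc ((padGe P.md t.castSucc)ᵀ * padGe P.md t.succ) - mc (padGe P.md t.castSucc) * (mc (Kcal P K t.castSucc) * ((s • 1 - mc (Acal P K L))⁻¹ * (mc (Bcal P) * (mc (padGe P.md t.castSucc) * mc ((padGe P.md t.castSucc)ᵀ * padGe P.md t.succ))))) := by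
        rw [Matrix.sub_mul, Matrix.one_mul, Matrix.mul_sub]
        congr 2
        rw [Matrix.mul_assoc, Matrix.mul_assoc, Matrix.mul_assoc]
      have hkey : (mc (Dmat P K t) * ((s • 1 - mc (AKL P K L t.succ.castSucc))⁻¹ * mc (Bdown P t.succ)) + mc ((padGe P.md t.castSucc)ᵀ * padGe P.md t.succ)) * (1 - mc (Kcal P K t.succ) * ((s • 1 - mc (Acal P K L))⁻¹ * (mc (Bcal P) * mc (padGe P.md t.succ)))) = (1 - mc (Kcal P K t.castSucc) * ((s • 1 - mc (Acal P K L))⁻¹ * (mc (Bcal P) * mc (padGe P.md t.castSucc)))) * mc ((padGe P.md t.castSucc)ᵀ * padGe P.md t.succ) := by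
        apply hcancel
        calc mc (padGe P.md t.castSucc) * ((mc (Dmat P K t) * ((s • 1 - mc (AKL P K L t.succ.castSucc))⁻¹ * mc (Bdown P t.succ)) + mc ((padGe P.md t.castSucc)ᵀ * padGe P.md t.succ)) * (1 - mc (Kcal P K t.succ) * ((s • 1 - mc (Acal P K L))⁻¹ * (mc (Bcal P) * mc (padGe P.md t.succ)))))
            = mc (padGe P.md t.castSucc) * (mc (Dmat P K t) * ((s • 1 - mc (AKL P K L t.succ.castSucc))⁻¹ * mc (Bdown P t.succ)) * (1 - mc (Kcal P K t.succ) * ((s • 1 - mc (Acal P K L))⁻¹ * (mc (Bcal P) * mc (padGe P.md t.succ))))) + mc (padGe P.md t.castSucc) * (mc ((padGe P.md t.castSucc)ᵀ * padGe P.md t.succ) * (1 - mc (Kcal P K t.succ) * ((s • 1 - mc (Acal P K L))⁻¹ * (mc (Bcal P) * mc (padGe P.md t.succ))))) := by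
              rw [Matrix.add_mul, Matrix.mul_add]
          _ = mc (padGe P.md t.castSucc) * (mc (Dmat P K t) * ((s • 1 - mc (AKL P K L t.succ.castSucc))⁻¹ * (mc (Bdown P t.succ) * (1 - mc (Kcal P K t.succ) * ((s • 1 - mc (Acal P K L))⁻¹ * (mc (Bcal P) * mc (padGe P.md t.succ))))))) + mc (padGe P.md t.castSucc) * (mc ((padGe P.md t.castSucc)ᵀ * padGe P.md t.succ) * (1 - mc (Kcal P K t.succ) * ((s • 1 - mc (Acal P K L))⁻¹ * (mc (Bcal P) * mc (padGe P.md t.succ))))) := by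
              rw [Matrix.mul_assoc (mc (Dmat P K t)), Matrix.mul_assoc ((s • 1 - mc (AKL P K L t.succ.castSucc))⁻¹)]
          _ = mc (padGe P.md t.castSucc) * (mc (Dmat P K t) * (mc (Th P.nd t.succ) * ((s • 1 - mc (Acal P K L))⁻¹ * (mc (Bcal P) * mc (padGe P.md t.succ))))) + mc (padGe P.md t.castSucc) * (mc ((padGe P.md t.castSucc)ᵀ * padGe P.md t.succ) * (1 - mc (Kcal P K t.succ) * ((s • 1 - mc (Acal P K L))⁻¹ * (mc (Bcal P) * mc (padGe P.md t.succ))))) := by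
              rw [← hst]
          _ = (mc (padGe P.md t.castSucc) * (mc (Dmat P K t) * mc (Th P.nd t.succ))) * ((s • 1 - mc (Acal P K L))⁻¹ * (mc (Bcal P) * mc (padGe P.md t.succ))) + (mc (padGe P.md t.castSucc) * mc ((padGe P.md t.castSucc)ᵀ * padGe P.md t.succ)) * (1 - mc (Kcal P K t.succ) * ((s • 1 - mc (Acal P K L))⁻¹ * (mc (Bcal P) * mc (padGe P.md t.succ)))) := by
              rw [← Matrix.mul_assoc (mc (Dmat P K t)) (mc (Th P.nd t.succ)), ← Matrix.mul_assoc (mc (padGe P.md t.castSucc)),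
                ← Matrix.mul_assoc (mc (padGe P.md t.castSucc)) (mc ((padGe P.md t.castSucc)ᵀ * padGe P.md t.succ))]
          _ = (mc (padGe P.md t.succ) * mc (Kcal P K t.succ) - mc (padGe P.md t.castSucc) * mc (Kcal P K t.castSucc)) * ((s • 1 - mc (Acal P K L))⁻¹ * (mc (Bcal P) * mc (padGe P.md t.succ))) + mc (padGe P.md t.succ) * (1 - mc (Kcal P K t.succ) * ((s • 1 - mc (Acal P K L))⁻¹ * (mc (Bcal P) * mc (padGe P.md t.succ)))) := by
              rw [hDT, hE]
          _ = mc (padGe P.md t.succ) * (mc (Kcal P K t.succ) * ((s • 1 - mc (Acal P K L))⁻¹ * (mc (Bcal P) * mc (padGe P.md t.succ)))) - mc (padGe P.md t.castSucc) * (mc (Kcal P K t.castSucc) * ((s • 1 - mc (Acal P K L))⁻¹ * (mc (Bcal P) * mc (padGe P.md t.succ))))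
              + (mc (padGe P.md t.succ) - mc (padGe P.md t.succ) * (mc (Kcal P K t.succ) * ((s • 1 - mc (Acal P K L))⁻¹ * (mc (Bcal P) * mc (padGe P.md t.succ))))) := by
              rw [Matrix.sub_mul, Matrix.mul_assoc (mc (padGe P.md t.succ)) (mc (Kcal P K t.succ)),
                Matrix.mul_assoc (mc (padGe P.md t.castSucc)) (mc (Kcal P K t.castSucc)), Matrix.mul_sub, Matrix.mul_one]
          _ = mc (padGe P.md t.succ) - mc (padGe P.md t.castSucc) * (mc (Kcal P K t.castSucc) * ((s • 1 - mc (Acal P K L))⁻¹ * (mc (Bcal P) * mc (padGe P.md t.succ)))) := by abel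
          _ = mc (padGe P.md t.castSucc) * mc ((padGe P.md t.castSucc)ᵀ * padGe P.md t.succ) - mc (padGe P.md t.castSucc) * (mc (Kcal P K t.castSucc) * ((s • 1 - mc (Acal P K L))⁻¹ * (mc (Bcal P) * (mc (padGe P.md t.castSucc) * mc ((padGe P.md t.castSucc)ᵀ * padGe P.md t.succ))))) := by rw [hE]
          _ = mc (padGe P.md t.castSucc) * ((1 - mc (Kcal P K t.castSucc) * ((s • 1 - mc (Acal P K L))⁻¹ * (mc (Bcal P) * mc (padGe P.md t.castSucc)))) * mc ((padGe P.md t.castSucc)ᵀ * padGe P.md t.succ)) := hlast.symm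
      have hG : G12 P K L s * mc (padGe P.md t.succ) = (G12 P K L s * mc (padGe P.md t.castSucc)) * mc ((padGe P.md t.castSucc)ᵀ * padGe P.md t.succ) := by
        rw [Matrix.mul_assoc, hE]
      rw [hG, IH, Matrix.mul_assoc, ← hkey, ← Matrix.mul_assoc, ← Uhat_succ]
  have hm := main i (le_refl _)
  have hfac : mc (msqrt (Psidd P i)) -
        mc (msqrt (Psidd P i)) * mc (Kcal P K i) * (s • 1 - mc (Acal P K L))⁻¹ *
          mc (Bcal P * padGe P.md i)
      = mc (msqrt (Psidd P i)) *
          (1 - mc (Kcal P K i) *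
            ((s • 1 - mc (Acal P K L))⁻¹ * (mc (Bcal P) * mc (padGe P.md i)))) := by
    rw [mc_mul, Matrix.mul_sub, Matrix.mul_one]
    congr 1
    simp only [Matrix.mul_assoc]
  rw [hfac, ← Matrix.mul_assoc, Uprod_mul_msqrt P K L s hH i]
  exact hm

end TriLQG
end
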